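/- arXiv:1807.01858 — 15 statements merged into one kernel-verified Lean document; each statement's English description precedes it below -/
import Mathlib

section
/- If u is an element of F_{q^3} (q = 2^s) satisfying u^2 + (β^{q^2-1} + β^{q-1} + 1)u + β^{q-1} = 0 for some nonzero β in F_{q^3}, then u^{q+1} + u + 1 = 0. -/
theorem stmt_0 (s : ℕ) (hs : 0 < s) (q : ℕ) (hq : q = 2 ^ s)
    (K : Type*) [Field K] [Fintype K] (hK : Fintype.card K = q ^ 3)
    (β : K) (hβ : β ≠ 0) (u : K)
    (h : u ^ 2 + (β ^ (q ^ 2 - 1) + β ^ (q - 1) + 1) * u + β ^ (q - 1) = 0) :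
    u ^ (q + 1) + u + 1 = 0 := by
  have hq2 : 2 ≤ q := by
    subst hq
    calc 2 = 2 ^ 1 := (pow_one 2).symm
    _ ≤ 2 ^ s := Nat.pow_le_pow_right (by norm_num) hs
  have hq0 : q ≠ 0 := by omega
  -- characteristic 2
  have hchar : (2 : K) = 0 := by
    have h0 : ((Fintype.card K : ℕ) : K) = 0 := FiniteField.cast_card_eq_zero K
    rw [hK, hq] at h0
    push_cast at h0
    have h1 : ((2 : K) ^ s) = 0 :=
      (pow_eq_zero_iff (by norm_num : (3:ℕ) ≠ 0)).mp h0
    exact (pow_eq_zero_iff (by omega : s ≠ 0)).mp h1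
  haveI : Fact (Nat.Prime 2) := ⟨Nat.prime_two⟩
  haveI hchp : CharP K 2 := by
    have hr2 : ringChar K = 2 := CharP.ringChar_of_prime_eq_zero Nat.prime_two hchar
    rw [← hr2]; exact ringChar.charP K
  -- Frobenius facts
  have hfrob : ∀ x y : K, (x + y) ^ q = x ^ q + y ^ q := by
    intro x y; rw [hq]; exact add_pow_char_pow x y 2 s
  have hfsq : ∀ x : K, (x ^ 2) ^ q = (x ^ q) ^ 2 := by
    intro x; rw [← pow_mul, mul_comm, pow_mul]
  have hpow3 : ∀ x : K, ((x ^ q) ^ q) ^ q = x := by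
    intro x
    rw [← pow_mul, ← pow_mul]
    have hqq : q * (q * q) = Fintype.card K := by rw [hK]; ring
    rw [hqq, FiniteField.pow_card]
  -- notation
  obtain ⟨r, hr⟩ : ∃ r, q = r + 2 := ⟨q - 2, by omega⟩
  have hq1 : q - 1 = r + 1 := by omega
  set a := β ^ (q - 1) with ha_def
  set b := a ^ q with hb_def
  set c := b ^ q with hc_def
  have ha0 : a ≠ 0 := pow_ne_zero _ hβ
  have hb0 : b ≠ 0 := pow_ne_zero _ ha0
  have hc0 : c ≠ 0 := pow_ne_zero _ hb0
  -- β^(q²-1) = a*b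
  have hexpA : q ^ 2 - 1 = (q - 1) + (q - 1) * q := by
    rw [hq1, hr]
    apply Nat.sub_eq_of_eq_add
    ring
  have hA : β ^ (q ^ 2 - 1) = a * b := by
    rw [hexpA, pow_add, pow_mul, ← ha_def, ← hb_def]
  rw [hA] at h
  -- a*b*c = 1
  have hexpN : (q - 1) + (q - 1) * q + (q - 1) * q * q = q * q * q - 1 := by
    rw [hq1, hr]
    apply Nat.eq_sub_of_add_eq
    ring
  have habc : a * b * c = 1 := by
    rw [hc_def, hb_def, ha_def, ← pow_mul β (q - 1) q, ← pow_mul β ((q - 1) * q) q,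
      ← pow_add, ← pow_add, hexpN]
    have hcard : q * q * q = Fintype.card K := by rw [hK]; ring
    rw [hcard]
    exact FiniteField.pow_card_sub_one_eq_one β hβ
  have hcq : c ^ q = a := by rw [hc_def, hb_def]; exact hpow3 a
  set v := u ^ q with hv_def
  set w := v ^ q with hw_def
  have hwq : w ^ q = u := by rw [hw_def, hv_def]; exact hpow3 u
  -- Frobenius of the quadratic
  have h2 : v ^ 2 + (b * c + b + 1) * v + b = 0 := by
    have e : (u ^ 2 + (a * b + a + 1) * u + a) ^ q = 0 := by
      rw [h]; exact zero_pow hq0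
    rw [hfrob, hfrob, mul_pow, hfrob, hfrob, one_pow, mul_pow, hfsq] at e
    rw [← hb_def, ← hc_def, ← hv_def] at e
    linear_combination e
  -- key factorization
  have hprod : a * ((u * v + u + 1) * ((u + 1) * v + b * u)) = 0 := by
    linear_combination (a * (u ^ 2 + u)) * h2 - v * h - (u ^ 2 * v + u * v) * habc +
      (a * v * (u + 1)) * hchar
  rcases mul_eq_zero.mp hprod with h' | h'
  · exact absurd h' ha0
  rcases mul_eq_zero.mp h' with hgood | e1
  · -- u*v + u + 1 = 0, which is the goal
    rw [pow_succ, ← hv_def]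
    linear_combination hgood
  · -- wrong factor: (u+1)*v + b*u = 0
    have hu0 : u ≠ 0 := by
      intro h0
      apply ha0
      rw [h0] at h
      simpa using h
    have hv0 : v ≠ 0 := by rw [hv_def]; exact pow_ne_zero _ hu0
    -- Frobenius iterates of e1
    have e2 : (v + 1) * w + c * v = 0 := by
      have e : ((u + 1) * v + b * u) ^ q = 0 := by rw [e1]; exact zero_pow hq0
      rw [hfrob, mul_pow, mul_pow, hfrob u 1, one_pow] at e
      rw [← hw_def, ← hc_def, ← hv_def] at e
      linear_combination e
    have e3 : (w + 1) * u + a * w = 0 := by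
      have e : ((v + 1) * w + c * v) ^ q = 0 := by rw [e2]; exact zero_pow hq0
      rw [hfrob, mul_pow, mul_pow, hfrob v 1, one_pow, hwq, hcq] at e
      rw [← hw_def] at e
      linear_combination e
    have key : (b * c + b + 1) * (b * u + v) = 0 := by
      linear_combination b * (v + 1) * e3 - b * (u + a) * e2 - b * (1 - c) * e1 + v * habc +
        (v + b * v + b ^ 2 * u) * hchar
    rcases mul_eq_zero.mp key with keyc | hbv
    · have hab : a * b + a + 1 = 0 := by linear_combination a * keyc - habc
      have husq : u ^ 2 = a := by linear_combination -h + u * hab + u ^ 2 * hchar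
      have hu1 : u + 1 ≠ 0 := by
        intro h0
        apply mul_ne_zero ha0 hb0
        linear_combination -h + (u + a + a * b) * h0
      have final : (u * v + u + 1) * (u + 1) = 0 := by
        linear_combination u * e1 + (1 - b) * husq - hab + (u + a + 1) * hchar
      have hgood : u * v + u + 1 = 0 :=
        (mul_eq_zero.mp final).resolve_right hu1
      rw [pow_succ, ← hv_def]
      linear_combination hgood
    · exact absurd (by linear_combination e1 - hbv : u * v = 0) (mul_ne_zero hu0 hv0)
end

section
/- Let q = 2^l and β a nonzero element of F_{q^6}. If the quadratic equation u^2 + (β^{q^4-1} + β^{q^2-1} + 1)u + β^{q^2-1} = 0 has a solution u in F_{q^6}, then u^{q^2+1} + u + 1 = 0. (Menezes-Teske-Weng conjecture.) -/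
private lemma mtw_nat1 (q : ℕ) (h : 1 ≤ q) :
    (q ^ 2 - 1) * q ^ 2 + (q ^ 2 - 1) = q ^ 4 - 1 := by
  obtain ⟨m, hm⟩ : ∃ m, q ^ 2 = m + 1 :=
    ⟨q ^ 2 - 1, by have : 1 ≤ q ^ 2 := Nat.one_le_pow _ _ h; omega⟩
  have h4 : q ^ 4 = (q ^ 2) ^ 2 := by ring
  rw [h4, hm, Nat.add_sub_cancel]
  have h3 : (m + 1) ^ 2 = m * (m + 1) + m + 1 := by ring
  rw [h3, Nat.add_sub_cancel]

private lemma mtw_nat2 (q : ℕ) (h : 1 ≤ q) :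
    (q ^ 2 - 1) + (q ^ 2 - 1) * q ^ 2 + (q ^ 2 - 1) * q ^ 2 * q ^ 2 = q ^ 6 - 1 := by
  obtain ⟨m, hm⟩ : ∃ m, q ^ 2 = m + 1 :=
    ⟨q ^ 2 - 1, by have : 1 ≤ q ^ 2 := Nat.one_le_pow _ _ h; omega⟩
  have h6 : q ^ 6 = (q ^ 2) ^ 3 := by ring
  rw [h6, hm, Nat.add_sub_cancel]
  have h3 : (m + 1) ^ 3 = (m + m * (m + 1) + m * (m + 1) * (m + 1)) + 1 := by ring
  rw [h3, Nat.add_sub_cancel]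

/-- The core of the MTW conjecture, as pure field algebra in characteristic 2. -/
private lemma mtw_main {K : Type*} [Field K] (b c d u v w : K)
    (two : (2 : K) = 0) (hb : b ≠ 0) (hc : c ≠ 0) (hd : d ≠ 0)
    (hbcd : b * c * d = 1)
    (L1 : v * w + v + 1 = 0 → w * u + w + 1 = 0)
    (L2 : w * u + w + 1 = 0 → u * v + u + 1 = 0)
    (e0 : u ^ 2 + (c * b + b + 1) * u + b = 0)
    (e1 : v ^ 2 + (d * c + c + 1) * v + c = 0)
    (e2 : w ^ 2 + (b * d + d + 1) * w + d = 0) :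
    u * v + u + 1 = 0 := by
  have hu : u ≠ 0 := by
    intro h0
    apply hb
    linear_combination e0 - (u + (c * b + b + 1)) * h0
  have hu1 : u + 1 ≠ 0 := by
    intro h0
    have hcb : c * b = 0 := by linear_combination -e0 + (c * b + u + b) * h0
    exact mul_ne_zero hc hb hcb
  have k0 : b * ((u * v + u + 1) * ((u + 1) * v + c * u)) = 0 := by
    linear_combination u * (u + 1) * b * e1 - u * (u + 1) * v * hbcd - v * e0 +
      (u * v * b + v * b) * two
  rcases mul_eq_zero.mp ((mul_eq_zero.mp k0).resolve_left hb) with hG | hbad0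
  · exact hG
  have k1 : c * ((v * w + v + 1) * ((v + 1) * w + d * v)) = 0 := by
    linear_combination v * (v + 1) * c * e2 - v * (v + 1) * w * hbcd - w * e1 +
      (v * w * c + w * c) * two
  rcases mul_eq_zero.mp ((mul_eq_zero.mp k1).resolve_left hc) with hG1 | hbad1
  · exact L2 (L1 hG1)
  have k2 : d * ((w * u + w + 1) * ((w + 1) * u + b * w)) = 0 := by
    linear_combination w * (w + 1) * d * e0 - w * (w + 1) * u * hbcd - u * e2 +
      (w * u * d + u * d) * two
  rcases mul_eq_zero.mp ((mul_eq_zero.mp k2).resolve_left hd) with hG2 | hbad2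
  · exact L2 hG2
  -- the "all-bad" case
  have hAz : u ^ 2 * (c * b + b + 1) = 0 := by
    linear_combination b * (u + 1) * (u + b) * hbad1 + b * (u + 1) * (v + 1) * hbad2 +
      (b * u + b * d * (u + b)) * hbad0 + (b * u + u ^ 2) * hbcd +
      (-(u ^ 2 * v * w * b) - u ^ 2 * v * b * d - u ^ 2 * v * b - u ^ 2 * w * b
        - u ^ 2 * b * c * d + u ^ 2 - u * v * w * b ^ 2 - u * v * w * b - u * v * b ^ 2 * d
        - u * v * b * d - u * v * b - u * w * b ^ 2 - u * w * b - u * b ^ 2 * c * d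
        - v * w * b ^ 2 - v * b ^ 2 * d - w * b ^ 2) * two
  have hA : c * b + b + 1 = 0 :=
    (mul_eq_zero.mp hAz).resolve_left (pow_ne_zero 2 hu)
  have hu2 : u ^ 2 = b := by linear_combination e0 - u * hA - b * two
  have hfin : (u + 1) * (u * v + u + 1) = 0 := by
    linear_combination u * hbad0 + (c + 1) * hu2 + hA + (u - u ^ 2 * c) * two
  exact (mul_eq_zero.mp hfin).resolve_left hu1

theorem stmt_1 (l : ℕ) (hl : 0 < l) (q : ℕ) (hq : q = 2 ^ l)
    (K : Type*) [Field K] [Fintype K] (hK : Fintype.card K = q ^ 6)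
    (β : K) (hβ : β ≠ 0) (u : K)
    (h : u ^ 2 + (β ^ (q ^ 4 - 1) + β ^ (q ^ 2 - 1) + 1) * u + β ^ (q ^ 2 - 1) = 0) :
    u ^ (q ^ 2 + 1) + u + 1 = 0 := by
  have hq1 : 1 ≤ q := by
    rw [hq]; exact Nat.one_le_two_pow
  -- characteristic 2
  haveI hchar : CharP K 2 := by
    obtain ⟨p, hpi⟩ := CharP.exists K
    haveI := hpi
    obtain ⟨n, hp, hcard⟩ := FiniteField.card K p
    have h2 : p = 2 := by
      have hdvd : p ∣ 2 ^ (6 * l) := by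
        have he : (2 : ℕ) ^ (6 * l) = p ^ (n : ℕ) := by
          rw [← hcard, hK, hq, ← pow_mul, Nat.mul_comm]
        rw [he]
        exact dvd_pow_self p n.pos.ne'
      have := hp.dvd_of_dvd_pow hdvd
      exact (Nat.prime_dvd_prime_iff_eq hp Nat.prime_two).mp this
    exact h2 ▸ hpi
  have two : (2 : K) = 0 := by exact_mod_cast CharP.cast_eq_zero K 2
  have hQ2 : q ^ 2 = 2 ^ (2 * l) := by rw [hq, ← pow_mul, Nat.mul_comm]
  have fadd : ∀ x y : K, (x + y) ^ q ^ 2 = x ^ q ^ 2 + y ^ q ^ 2 := by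
    intro x y
    rw [hQ2]
    exact add_pow_char_pow x y 2 (2 * l)
  have hQne : q ^ 2 ≠ 0 := by positivity
  have hsw : ∀ z : K, (z ^ 2) ^ q ^ 2 = (z ^ q ^ 2) ^ 2 := by
    intro z; rw [← pow_mul, ← pow_mul, Nat.mul_comm]
  have fraise : ∀ x p r : K, x ^ 2 + (r * p + p + 1) * x + p = 0 →
      (x ^ q ^ 2) ^ 2 + (r ^ q ^ 2 * p ^ q ^ 2 + p ^ q ^ 2 + 1) * x ^ q ^ 2 + p ^ q ^ 2 = 0 := by
    intro x p r hx
    have h1 : (x ^ 2 + (r * p + p + 1) * x + p) ^ q ^ 2 = 0 := by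
      rw [hx]; exact zero_pow hQne
    simp only [fadd, mul_pow, one_pow, hsw] at h1
    exact h1
  have glift : ∀ x y : K, x * y + x + 1 = 0 →
      x ^ q ^ 2 * y ^ q ^ 2 + x ^ q ^ 2 + 1 = 0 := by
    intro x y hxy
    have h1 : (x * y + x + 1) ^ q ^ 2 = 0 := by rw [hxy]; exact zero_pow hQne
    simp only [fadd, mul_pow, one_pow] at h1
    exact h1
  set b : K := β ^ (q ^ 2 - 1) with hbdef
  set c : K := b ^ q ^ 2 with hcdef
  set d : K := c ^ q ^ 2 with hddef
  set v : K := u ^ q ^ 2 with hvdef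
  set w : K := v ^ q ^ 2 with hwdef
  have hbne : b ≠ 0 := pow_ne_zero _ hβ
  have hcne : c ≠ 0 := pow_ne_zero _ hbne
  have hdne : d ≠ 0 := pow_ne_zero _ hcne
  have h4 : β ^ (q ^ 4 - 1) = c * b := by
    rw [hcdef, hbdef, ← pow_mul, ← pow_add, mtw_nat1 q hq1]
  have hcexp : c = β ^ ((q ^ 2 - 1) * q ^ 2) := by rw [hcdef, hbdef, ← pow_mul]
  have hdexp : d = β ^ ((q ^ 2 - 1) * q ^ 2 * q ^ 2) := by rw [hddef, hcexp, ← pow_mul]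
  have hbcd : b * c * d = 1 := by
    rw [hbdef, hcexp, hdexp, ← pow_add, ← pow_add, mtw_nat2 q hq1, ← hK]
    exact FiniteField.pow_card_sub_one_eq_one β hβ
  have hcube : ∀ x : K, ((x ^ q ^ 2) ^ q ^ 2) ^ q ^ 2 = x := by
    intro x
    have hx : ((x ^ q ^ 2) ^ q ^ 2) ^ q ^ 2 = x ^ q ^ 6 := by
      rw [← pow_mul, ← pow_mul]; congr 1; ring
    rw [hx, ← hK]
    exact FiniteField.pow_card x
  have hdq : d ^ q ^ 2 = b := by rw [hddef, hcdef]; exact hcube b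
  have hwq : w ^ q ^ 2 = u := by rw [hwdef, hvdef]; exact hcube u
  rw [h4] at h
  have e1 : v ^ 2 + (d * c + c + 1) * v + c = 0 := fraise u b c h
  have e2' := fraise v c d e1
  rw [hdq] at e2'
  have e2 : w ^ 2 + (b * d + d + 1) * w + d = 0 := e2'
  have L1 : v * w + v + 1 = 0 → w * u + w + 1 = 0 := by
    intro hg
    have := glift v w hg
    rwa [hwq] at this
  have L2 : w * u + w + 1 = 0 → u * v + u + 1 = 0 := by
    intro hg
    have := glift w u hg
    rwa [hwq] at this
  have main := mtw_main b c d u v w two hbne hcne hdne hbcd L1 L2 h e1 e2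
  rw [pow_succ]
  linear_combination main
end

section
/- Let q = 2^s, β a nonzero element of F_{q^3} with Tr_{q^3/q}(β) ≠ 0, and u ∈ F_{q^3}. Then u^2 + (β^{q^2-1} + β^{q-1} + 1)u + β^{q-1} = 0 holds if and only if u^{q+1} + u + 1 = 0 and βu + β^q + β ∈ F_q. -/
theorem stmt_2 (s : ℕ) (hs : 0 < s) (q : ℕ) (hq : q = 2 ^ s)
    (K : Type*) [Field K] [Fintype K] (hK : Fintype.card K = q ^ 3)
    (β : K) (hβ : β ≠ 0) (htr : β + β ^ q + β ^ q ^ 2 ≠ 0) (u : K) :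
    u ^ 2 + (β ^ (q ^ 2 - 1) + β ^ (q - 1) + 1) * u + β ^ (q - 1) = 0 ↔
      u ^ (q + 1) + u + 1 = 0 ∧ (β * u + β ^ q + β) ^ q = β * u + β ^ q + β := by
  have hq1 : 1 ≤ q := by subst hq; exact Nat.one_le_two_pow
  -- characteristic 2
  haveI hcp : CharP K (ringChar K) := ringChar.charP K
  obtain ⟨n, hp, hcard⟩ := FiniteField.card K (ringChar K)
  have hchar2 : ringChar K = 2 := by
    have h' : ringChar K ^ (n : ℕ) = 2 ^ (s * 3) := by
      rw [← hcard, hK, hq, ← pow_mul]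
    have hdvd : ringChar K ∣ 2 ^ (s * 3) := by
      rw [← h']; exact dvd_pow_self _ n.pos.ne'
    exact (Nat.prime_dvd_prime_iff_eq hp Nat.prime_two).mp (hp.dvd_of_dvd_pow hdvd)
  haveI : CharP K 2 := hchar2 ▸ hcp
  haveI : Fact (Nat.Prime 2) := ⟨Nat.prime_two⟩
  haveI : ExpChar K 2 := ExpChar.prime Nat.prime_two
  have htwo : (2 : K) = 0 := by exact_mod_cast CharP.cast_eq_zero K 2
  set F : K →+* K := iterateFrobenius K 2 s with hFdef
  have hF : ∀ x : K, F x = x ^ q := fun x => by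
    rw [hFdef, iterateFrobenius_def, hq]
  have hcube : ∀ x : K, ((x ^ q) ^ q) ^ q = x := fun x => by
    rw [← pow_mul, ← pow_mul]
    have h3 : q * (q * q) = q ^ 3 := by ring
    have h3' : q * q * q = q ^ 3 := by ring
    rw [show q * (q * q) = q ^ 3 from h3, ← hK]
    exact FiniteField.pow_card x
  have hFb : (β ^ q) ^ q = β ^ q ^ 2 := by
    rw [← pow_mul]; congr 1; ring
  have hFc2 : (β ^ q) ^ q ^ 2 = β := by
    rw [← pow_mul, show q * q ^ 2 = q ^ 3 from by ring, ← hK]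
    exact FiniteField.pow_card β
  have hb1 : β ^ (q - 1) * β = β ^ q := by
    rw [← pow_succ]; congr 1; omega
  have hb2 : β ^ (q ^ 2 - 1) * β = β ^ q ^ 2 := by
    rw [← pow_succ]; congr 1
    have : 1 ≤ q ^ 2 := Nat.one_le_pow _ _ (by omega)
    omega
  have hbne : (β : K) ^ q ≠ 0 := pow_ne_zero _ hβ
  -- translate goal LHS
  have hAiff : (u ^ 2 + (β ^ (q ^ 2 - 1) + β ^ (q - 1) + 1) * u + β ^ (q - 1) = 0) ↔
      (β * u ^ 2 + (β ^ q ^ 2 + β ^ q + β) * u + β ^ q = 0) := by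
    constructor
    · intro h
      linear_combination β * h - u * hb2 - u * hb1 - hb1
    · intro h
      apply mul_left_cancel₀ hβ
      rw [mul_zero]
      linear_combination h + u * hb2 + u * hb1 + hb1
  have hwq : (β * u + β ^ q + β) ^ q = β ^ q * u ^ q + β ^ q ^ 2 + β ^ q := by
    rw [← hF (β * u + β ^ q + β), map_add, map_add, map_mul]
    simp only [hF]
    rw [hFb]
  have hupow : u ^ (q + 1) = u ^ q * u := by rw [pow_succ]
  rw [hAiff, hupow, hwq]
  constructor
  · intro hA
    -- Frobenius of hA
    have hAF := congrArg F hA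
    simp only [map_add, map_mul, map_pow, map_zero, map_one] at hAF
    simp only [hF] at hAF
    rw [hFb, hFc2] at hAF
    -- z := β^q * u^q + β*u + β + β^q^2 satisfies z^2 = T z
    have hz2 : (β ^ q * u ^ q + β * u + β + β ^ q ^ 2) *
          (β ^ q * u ^ q + β * u + β + β ^ q ^ 2)
        = (β + β ^ q + β ^ q ^ 2) * (β ^ q * u ^ q + β * u + β + β ^ q ^ 2) := by
      linear_combination (β ^ q) * hAF + β * hA +
        (- β ^ q * β ^ q ^ 2 - (β ^ q) ^ 2 * u ^ q - β * β ^ q - β * β ^ q * u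
          + β * β ^ q * u * u ^ q) * htwo
    have hfact : (β ^ q * u ^ q + β * u + β + β ^ q ^ 2) *
        ((β ^ q * u ^ q + β * u + β + β ^ q ^ 2) - (β + β ^ q + β ^ q ^ 2)) = 0 := by
      linear_combination hz2
    rcases mul_eq_zero.mp hfact with hz0 | hzT
    · constructor
      · -- u^(q+1) + u + 1 = 0
        have hb0 : β ^ q * (u ^ q * u + u + 1) = 0 := by
          linear_combination u * hz0 + hA + (- β ^ q ^ 2 * u - β * u - β * u ^ 2) * htwo
        have h := (mul_eq_zero.mp hb0).resolve_left hbne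
        linear_combination h
      · -- trace condition
        linear_combination hz0 + (- β - β * u) * htwo
    · -- z = T case: contradiction
      exfalso
      rw [sub_eq_zero] at hzT
      have he1 : β ^ q * u ^ q + β * u = β ^ q := by
        linear_combination hzT
      have he2 := congrArg F he1
      simp only [map_add, map_mul, map_pow] at he2
      simp only [hF] at he2
      rw [hFb] at he2
      have he3 := congrArg F he2
      simp only [map_add, map_mul, map_pow] at he3
      simp only [hF] at he3
      rw [hFc2, hcube u, hFb] at he3
      apply htr
      linear_combination - he1 - he2 - he3 +
        (β ^ q ^ 2 * (u ^ q) ^ q + β ^ q * u ^ q + β * u) * htwo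
  · rintro ⟨h1, h2⟩
    linear_combination β ^ q * h1 - u * h2 + (β ^ q ^ 2) * u * htwo
end

section
/- Let q = 2^s, β ∈ F_{q^3} nonzero, and u ∈ F_{q^3} a solution of βu^2 + Tr_{q^3/q}(β)u + β^q = 0. Then (u+1)^q is a solution of β^q v^2 + Tr_{q^3/q}(β)v + β = 0. -/
theorem stmt_4 (s : ℕ) (hs : 0 < s) (q : ℕ) (hq : q = 2 ^ s)
    (K : Type*) [Field K] [Fintype K] (hK : Fintype.card K = q ^ 3)
    (β : K) (hβ : β ≠ 0) (u : K)
    (h : β * u ^ 2 + (β + β ^ q + β ^ q ^ 2) * u + β ^ q = 0) :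
    β ^ q * ((u + 1) ^ q) ^ 2 + (β + β ^ q + β ^ q ^ 2) * (u + 1) ^ q + β = 0 := by
  subst hq
  -- characteristic 2
  have hr2 : ringChar K = 2 := by
    obtain ⟨n, hp, hcard⟩ := FiniteField.card K (ringChar K)
    have hdvd : ringChar K ∣ 2 := by
      have he : (2:ℕ) ^ (s * 3) = ringChar K ^ (n:ℕ) := by rw [← hcard, hK, pow_mul]
      have : ringChar K ∣ 2 ^ (s * 3) := by rw [he]; exact dvd_pow_self _ n.ne_zero
      exact hp.dvd_of_dvd_pow this
    exact (Nat.prime_dvd_prime_iff_eq hp Nat.prime_two).mp hdvd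
  haveI h2 : CharP K 2 := hr2 ▸ ringChar.charP K
  have htwo : (2 : K) = 0 := CharP.cast_eq_zero K 2
  have hfrob : ∀ x y : K, (x + y) ^ 2 ^ s = x ^ 2 ^ s + y ^ 2 ^ s := fun x y =>
    add_pow_char_pow x y 2 s
  have hq3 : β ^ (2 ^ s) ^ 3 = β := by rw [← hK]; exact FiniteField.pow_card β
  -- raise h to the q-th power
  have h' : β ^ 2 ^ s * (u ^ 2 ^ s) ^ 2 + (β + β ^ 2 ^ s + β ^ (2 ^ s) ^ 2) * u ^ 2 ^ s
      + β ^ (2 ^ s) ^ 2 = 0 := by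
    have hh := congrArg (· ^ 2 ^ s) h
    simp only [hfrob, mul_pow, ← pow_mul] at hh
    rw [show (2:ℕ) ^ (s * 2) * 2 ^ s = (2 ^ s) ^ 3 by ring, hq3,
      show (2:ℕ) ^ s * 2 ^ s = (2 ^ s) ^ 2 by ring,
      show 2 * 2 ^ s = 2 ^ s * 2 by ring,
      pow_mul u (2 ^ s) 2, zero_pow (by positivity : 2 ^ s ≠ 0)] at hh
    linear_combination hh
  rw [hfrob, one_pow]
  linear_combination h' + (β ^ 2 ^ s * u ^ 2 ^ s + β + β ^ 2 ^ s) * htwo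
end

section
/- Let q = 2^s with s ≡ 0 or 2 (mod 3). Then there is no u ∈ F_{q^3} such that u^{q+1} + u + 1 = 0 and u^3 + u + 1 = 0 simultaneously. -/
theorem stmt_8 (s : ℕ) (hs : 0 < s) (hmod : s % 3 = 0 ∨ s % 3 = 2)
    (q : ℕ) (hq : q = 2 ^ s)
    (K : Type*) [Field K] [Fintype K] (hK : Fintype.card K = q ^ 3) :
    ¬ ∃ u : K, u ^ (q + 1) + u + 1 = 0 ∧ u ^ 3 + u + 1 = 0 := by
  rintro ⟨u, h1, h2⟩
  -- characteristic 2
  obtain ⟨n, hprime, hcardp⟩ := FiniteField.card K (ringChar K)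
  have hpow : (ringChar K) ^ (n : ℕ) = 2 ^ (s * 3) := by
    rw [← hcardp, hK, hq, ← pow_mul]
  have hdvd : ringChar K ∣ 2 ^ (s * 3) := by
    rw [← hpow]; exact dvd_pow_self _ n.pos.ne'
  have hring : ringChar K = 2 :=
    (Nat.prime_dvd_prime_iff_eq hprime Nat.prime_two).mp (hprime.dvd_of_dvd_pow hdvd)
  have hchar : (2 : K) = 0 := by
    have h0 := ringChar.Nat.cast_ringChar (R := K)
    rw [hring] at h0
    exact_mod_cast h0
  -- u^7 = 1
  have h7 : u ^ 7 = 1 := by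
    linear_combination (u^4 + u^2 + u + 1) * h2 - (u^5 + u^4 + u^3 + u^2 + u + 1) * hchar
  have key : u ^ q = u ^ (2 ^ s % 7) := by
    conv_lhs => rw [hq, ← Nat.div_add_mod (2 ^ s) 7]
    rw [pow_add, pow_mul, h7, one_pow, one_mul]
  rw [pow_succ, key] at h1
  rcases hmod with hm | hm
  · obtain ⟨m, rfl⟩ : ∃ m, s = 3 * m := ⟨s / 3, by omega⟩
    have hr : 2 ^ (3 * m) % 7 = 1 := by
      rw [pow_mul, Nat.pow_mod]; norm_num
    rw [hr] at h1
    have hu : u = 0 := by linear_combination (1 - u) * h1 + h2 - hchar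
    rw [hu] at h2
    simp at h2
  · obtain ⟨m, rfl⟩ : ∃ m, s = 3 * m + 2 := ⟨s / 3, by omega⟩
    have hr : 2 ^ (3 * m + 2) % 7 = 4 := by
      rw [pow_add, Nat.mul_mod, pow_mul, Nat.pow_mod]; norm_num
    rw [hr] at h1
    have hu2 : u ^ 2 = 0 := by
      linear_combination -h1 + (u^2 - 1) * h2 + (u + 1) * hchar
    have hu : u = 0 := (pow_eq_zero_iff two_ne_zero).mp hu2
    rw [hu] at h2
    simp at h2
end

section
/- Let q = 2^s with s ≡ 1 (mod 3), and suppose u satisfies u^3 + u + 1 = 0 in an algebraic closure of F_2. Then u ∈ F_{q^3} and u^{q+1} + u + 1 = 0. Moreover, u^2 and u+1 are linearly independent over F_q. -/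
theorem stmt_9 (s : ℕ) (hs : 0 < s) (hmod : s % 3 = 1)
    (q : ℕ) (hq : q = 2 ^ s)
    (K : Type*) [Field K] [IsAlgClosed K] [CharP K 2]
    (u : K) (h : u ^ 3 + u + 1 = 0) :
    u ^ q ^ 3 = u ∧ u ^ (q + 1) + u + 1 = 0 ∧
      ∀ x y : K, x ^ q = x → y ^ q = y → x * u ^ 2 + y * (u + 1) = 0 → x = 0 ∧ y = 0 := by
  have h2 : (2 : K) = 0 := by exact_mod_cast CharP.cast_eq_zero K 2
  have hu8 : u ^ 8 = u := by
    linear_combination (u^5 - u^3 - u^2 + u + 2) * h + (-2*u - 1) * h2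
  have hpow : ∀ k : ℕ, u ^ 8 ^ k = u := by
    intro k
    induction k with
    | zero => simp
    | succ k ih => rw [pow_succ, pow_mul, ih, hu8]
  obtain ⟨k, hk⟩ : ∃ k, s = 3 * k + 1 := ⟨s / 3, by omega⟩
  have hq8 : q = 8 ^ k * 2 := by
    rw [hq, hk, pow_succ, pow_mul]; norm_num
  have huq : u ^ q = u ^ 2 := by
    rw [hq8, pow_mul, hpow]
  have hq3 : u ^ q ^ 3 = u := by
    have : q ^ 3 = 8 ^ s := by rw [hq, ← pow_mul, mul_comm, pow_mul]; norm_num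
    rw [this, hpow]
  have hfrob : ∀ a b : K, (a + b) ^ q = a ^ q + b ^ q := by
    intro a b
    rw [hq]
    exact add_pow_char_pow a b 2 s
  have hu0 : u ≠ 0 := by
    intro h0
    rw [h0] at h
    norm_num at h
  have hu1 : u + 1 ≠ 0 := by
    intro h1
    have hcontr : (1 : K) = 0 := by linear_combination (u^2 - u + 2) * h1 - h
    exact one_ne_zero hcontr
  refine ⟨hq3, ?_, ?_⟩
  · have h31 : u ^ (q + 1) = u ^ 3 := by rw [pow_succ, huq]; ring
    rw [h31]; exact h
  · intro x y hx hy hxy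
    have hq0 : q ≠ 0 := by rw [hq]; positivity
    have h0 : x * (u ^ 2) ^ q + y * (u + 1) ^ q = 0 := by
      have := congrArg (· ^ q) hxy
      simp only [zero_pow hq0] at this
      rw [hfrob, mul_pow, mul_pow, hx, hy] at this
      exact this
    have hsq : (u ^ 2) ^ q = u ^ 4 := by
      rw [← pow_mul, mul_comm, pow_mul, huq]; ring
    have hxy2 : x * u ^ 4 + y * (u ^ 2 + 1) = 0 := by
      rw [hsq, hfrob, huq] at h0
      rw [one_pow] at h0
      linear_combination h0
    have hx0 : x * u ^ 3 = 0 := by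
      linear_combination (u^2 + 1) * hxy - (u + 1) * hxy2 + x*u^2 * h - x*u^2 * h2
    have hx' : x = 0 := by
      rcases mul_eq_zero.1 hx0 with h' | h'
      · exact h'
      · exact absurd h' (pow_ne_zero _ hu0)
    refine ⟨hx', ?_⟩
    rw [hx'] at hxy
    simp only [zero_mul, zero_add] at hxy
    rcases mul_eq_zero.1 hxy with h' | h'
    · exact h'
    · exact absurd h' hu1
end

section
/- Let q = 2^s and u ∈ F_{q^3} with u^{q+1} + u + 1 = 0. Set β_1 = u^q and let β_2 ∈ F_{q^3} satisfy β_2^{q-1} = u^2. Then β_1 and β_2 are linearly independent over F_q if and only if (s ≡ 0 or 2 (mod 3)) or (s ≡ 1 (mod 3) and u^3 + u + 1 ≠ 0). -/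
theorem stmt_10 (s : ℕ) (hs : 0 < s) (q : ℕ) (hq : q = 2 ^ s)
    (K : Type*) [Field K] [Fintype K] (hK : Fintype.card K = q ^ 3)
    (u : K) (h : u ^ (q + 1) + u + 1 = 0)
    (β₁ β₂ : K) (hβ₁ : β₁ = u ^ q) (hβ₂ : β₂ ^ (q - 1) = u ^ 2) :
    (∀ x y : K, x ^ q = x → y ^ q = y → x * β₁ + y * β₂ = 0 → x = 0 ∧ y = 0) ↔
      (s % 3 = 0 ∨ s % 3 = 2) ∨ (s % 3 = 1 ∧ u ^ 3 + u + 1 ≠ 0) := by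
  subst hq hβ₁
  -- characteristic 2
  have h2 : (2 : K) = 0 := by
    have hc := FiniteField.cast_card_eq_zero K
    rw [hK] at hc
    push_cast at hc
    have h3 : ((2 : K) ^ s) ^ 3 = 0 := hc
    have h2s : (2 : K) ^ s = 0 := pow_eq_zero_iff (show (3:ℕ) ≠ 0 by norm_num) |>.mp h3
    exact pow_eq_zero_iff (show s ≠ 0 by omega) |>.mp h2s
  haveI : CharP K 2 := (CharP.charP_iff_prime_eq_zero Nat.prime_two).mpr h2
  haveI : Fact (Nat.Prime 2) := ⟨Nat.prime_two⟩
  have frob : ∀ a b : K, (a + b) ^ 2 ^ s = a ^ 2 ^ s + b ^ 2 ^ s := fun a b =>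
    add_pow_char_pow a b 2 s
  have hq1 : 1 ≤ 2 ^ s := Nat.one_le_two_pow
  have hq2 : 2 ≤ 2 ^ s := by
    calc 2 = 2 ^ 1 := rfl
    _ ≤ 2 ^ s := Nat.pow_le_pow_right (by norm_num) hs
  have hu0 : u ≠ 0 := by
    rintro rfl
    simp [zero_pow (by omega : 2 ^ s + 1 ≠ 0)] at h
  have hu1 : u ≠ 1 := by
    rintro rfl
    simp only [one_pow] at h
    exact one_ne_zero (by linear_combination h - h2 : (1 : K) = 0)
  have huv : u * u ^ 2 ^ s = u + 1 := by
    linear_combination h - (u + 1) * h2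
  have hv0 : u ^ 2 ^ s ≠ 0 := pow_ne_zero _ hu0
  have hβ₂0 : β₂ ≠ 0 := by
    rintro rfl
    rw [zero_pow (by omega : 2 ^ s - 1 ≠ 0)] at hβ₂
    exact hu0 (pow_eq_zero_iff (show (2:ℕ) ≠ 0 by norm_num) |>.mp hβ₂.symm)
  have hβ₂q : β₂ ^ 2 ^ s = u ^ 2 * β₂ := by
    have : β₂ ^ 2 ^ s = β₂ ^ (2 ^ s - 1) * β₂ := by
      rw [← pow_succ]
      congr 1
      omega
    rw [this, hβ₂]
  -- key: if u^3 + u + 1 = 0 then u^q = u^2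
  have hcube_imp_v : u ^ 3 + u + 1 = 0 → u ^ 2 ^ s = u ^ 2 := by
    intro hc
    have : u * u ^ 2 ^ s = u * u ^ 2 := by
      linear_combination huv - hc + (u + 1) * h2
    exact mul_left_cancel₀ hu0 this
  -- main equivalence: independence ↔ u^3+u+1 ≠ 0
  have hPiff : (∀ x y : K, x ^ 2 ^ s = x → y ^ 2 ^ s = y → x * u ^ 2 ^ s + y * β₂ = 0 →
      x = 0 ∧ y = 0) ↔ u ^ 3 + u + 1 ≠ 0 := by
    constructor
    · intro P hc
      have hv : u ^ 2 ^ s = u ^ 2 := hcube_imp_v hc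
      set t : K := β₂ * (u ^ 2 ^ s)⁻¹ with ht
      have h1 : t * u ^ 2 ^ s + 1 * β₂ = 0 := by
        rw [ht]
        field_simp
        linear_combination β₂ * h2
      have hpow : (u ^ 2) ^ 2 ^ s = u ^ 4 := by
        rw [← pow_mul, mul_comm 2 (2 ^ s), pow_mul, hv]
        ring
      have htq : t ^ 2 ^ s = t := by
        rw [ht, hv, mul_pow, hβ₂q, inv_pow, hpow]
        field_simp
      have := P t 1 htq (one_pow _) h1
      exact one_ne_zero this.2
    · intro hne x y hx hy hxy
      by_contra hcon
      apply hne
      -- both x and y are nonzero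
      have hx0 : x ≠ 0 := by
        rintro rfl
        simp only [zero_mul, zero_add] at hxy
        rcases mul_eq_zero.mp hxy with h' | h'
        · exact hcon ⟨rfl, h'⟩
        · exact hβ₂0 h'
      have hy0 : y ≠ 0 := by
        rintro rfl
        simp only [zero_mul, add_zero] at hxy
        rcases mul_eq_zero.mp hxy with h' | h'
        · exact hcon ⟨h', rfl⟩
        · exact hv0 h'
      -- x * u^q = y * β₂
      have heq : x * u ^ 2 ^ s = y * β₂ := by
        linear_combination hxy - y * β₂ * h2
      -- raise to q-th power
      have heq2 : x * (u ^ 2 ^ s) ^ 2 ^ s = y * (u ^ 2 * β₂) := by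
        have := congrArg (· ^ 2 ^ s) heq
        simp only [mul_pow] at this
        rw [hx, hy, hβ₂q] at this
        exact this
      -- replace y * β₂ by x * u^q
      have heq3 : x * (u ^ 2 ^ s) ^ 2 ^ s = x * (u ^ 2 * u ^ 2 ^ s) := by
        linear_combination heq2 - u ^ 2 * heq
      have hvq : (u ^ 2 ^ s) ^ 2 ^ s = u ^ 2 * u ^ 2 ^ s := mul_left_cancel₀ hx0 heq3
      -- (u v)^q = v + 1  where v = u^q
      have hfr : (u * u ^ 2 ^ s) ^ 2 ^ s = u ^ 2 ^ s + 1 := by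
        rw [huv, frob, one_pow]
      rw [mul_pow, hvq] at hfr
      -- u^q * (u^2 * u^q) = v+1, and u^q*(u^2*u^q) = (u*u^q)^2 = (u+1)^2 = u^2+1
      have : u ^ 2 ^ s = u ^ 2 := by
        have hsq : (u * u ^ 2 ^ s) ^ 2 = (u + 1) ^ 2 := by rw [huv]
        linear_combination hsq - hfr + u * h2
      linear_combination (-u) * this + huv + (u + 1) * h2
  -- u^3+u+1 = 0 forces s % 3 = 1
  have hC : u ^ 3 + u + 1 = 0 → s % 3 = 1 := by
    intro hc
    have hv : u ^ 2 ^ s = u ^ 2 := hcube_imp_v hc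
    have h7 : u ^ 7 = 1 := by
      linear_combination (u ^ 4 - u ^ 2 - u + 1) * hc + (u ^ 2 - 1) * h2
    have hmod : u ^ 2 ^ s = u ^ (2 ^ s % 7) := by
      conv_lhs => rw [← Nat.div_add_mod (2 ^ s) 7]
      rw [pow_add, pow_mul, h7, one_pow, one_mul]
    have hmod7 : 2 ^ s % 7 = 2 ^ (s % 3) % 7 := by
      have : (2 : ℕ) ^ s ≡ 2 ^ (s % 3) [MOD 7] := by
        conv_lhs => rw [← Nat.div_add_mod s 3]
        rw [pow_add, pow_mul]
        calc ((2 ^ 3) ^ (s / 3) * 2 ^ (s % 3) : ℕ)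
            ≡ 1 ^ (s / 3) * 2 ^ (s % 3) [MOD 7] :=
              Nat.ModEq.mul_right _ (Nat.ModEq.pow _ (by decide))
          _ = 2 ^ (s % 3) := by rw [one_pow, one_mul]
      exact this
    by_contra hne
    rcases (show s % 3 = 0 ∨ s % 3 = 2 by omega) with hr | hr
    · rw [hr] at hmod7
      norm_num at hmod7
      rw [hmod7, pow_one] at hmod
      -- u^2 = u
      have : u ^ 2 = u := by rw [← hv, hmod]
      have : u * (u - 1) = 0 := by linear_combination this
      rcases mul_eq_zero.mp this with h' | h'
      · exact hu0 h'
      · exact hu1 (sub_eq_zero.mp h')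
    · rw [hr] at hmod7
      norm_num at hmod7
      rw [hmod7] at hmod
      -- u^4 = u^2
      have h42 : u ^ 4 = u ^ 2 := by rw [← hv, hmod]
      have : (u ^ 2) * ((u - 1) * (u + 1)) = 0 := by linear_combination h42
      rcases mul_eq_zero.mp this with h' | h'
      · exact hu0 (pow_eq_zero_iff (show (2:ℕ) ≠ 0 by norm_num) |>.mp h')
      · rcases mul_eq_zero.mp h' with h'' | h''
        · exact hu1 (sub_eq_zero.mp h'')
        · exact hu1 (by linear_combination h'' - h2)
  rw [hPiff]
  constructor
  · intro hne
    rcases (show s % 3 = 0 ∨ s % 3 = 1 ∨ s % 3 = 2 by omega) with hr | hr | hr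
    · exact Or.inl (Or.inl hr)
    · exact Or.inr ⟨hr, hne⟩
    · exact Or.inl (Or.inr hr)
  · rintro (hr | ⟨_, hne⟩)
    · intro hc
      have := hC hc
      omega
    · exact hne
end

section
/- Let q = 2^s and u ∈ F_{q^3}. If u^{q+1} + u + 1 ≠ 0, then the linearized polynomial L_u(β) = uβ^{q^2} + (u+1)β^q + (u^2+u)β is a permutation of F_{q^3}. -/
theorem stmt_11 (s : ℕ) (hs : 0 < s) (q : ℕ) (hq : q = 2 ^ s)
    (K : Type*) [Field K] [Fintype K] (hK : Fintype.card K = q ^ 3)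
    (u : K) (h : u ^ (q + 1) + u + 1 ≠ 0) :
    Function.Bijective
      (fun β : K => u * β ^ q ^ 2 + (u + 1) * β ^ q + (u ^ 2 + u) * β) := by
  -- characteristic 2
  haveI hp2 : Fact (Nat.Prime 2) := ⟨Nat.prime_two⟩
  have hchar2 : ringChar K = 2 := by
    obtain ⟨n, hprime, hcard⟩ := FiniteField.card K (ringChar K)
    have hdvd : ringChar K ∣ 2 ^ (s * 3) := by
      rw [pow_mul, ← hq, ← hK, hcard]
      exact dvd_pow_self _ n.pos.ne'
    exact (Nat.prime_dvd_prime_iff_eq hprime Nat.prime_two).mp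
      (hprime.dvd_of_dvd_pow hdvd)
  haveI hchar : CharP K 2 := hchar2 ▸ ringChar.charP K
  have htwo : (2 : K) = 0 := CharTwo.two_eq_zero
  -- the Frobenius-type ring hom x ↦ x ^ q
  set φ : K →+* K := iterateFrobenius K 2 s with hφdef
  have hφ : ∀ x : K, φ x = x ^ q := by
    intro x; rw [hφdef, iterateFrobenius_def, hq]
  have hφ2 : ∀ x : K, φ (φ x) = x ^ q ^ 2 := by
    intro x; rw [hφ, hφ, ← pow_mul, sq]
  have hq3 : ∀ x : K, φ (φ (φ x)) = x := by
    intro x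
    rw [hφ, hφ, hφ, ← pow_mul, ← pow_mul,
      show q * (q * q) = Fintype.card K by rw [hK]; ring, FiniteField.pow_card]
  -- kernel is trivial
  have key : ∀ β : K,
      u * β ^ q ^ 2 + (u + 1) * β ^ q + (u ^ 2 + u) * β = 0 → β = 0 := by
    intro β hE
    have hE0 : u * φ (φ β) + (u + 1) * φ β + (u ^ 2 + u) * β = 0 := by
      rw [hφ2, hφ]; exact hE
    have hE1 : φ u * β + (φ u + 1) * φ (φ β) + ((φ u) ^ 2 + φ u) * φ β = 0 := by
      have h1 := congrArg φ hE0
      simp only [map_add, map_mul, map_one, map_pow, map_zero] at h1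
      rw [hq3 β] at h1
      exact h1
    have hE2 : φ (φ u) * φ β + (φ (φ u) + 1) * β
        + ((φ (φ u)) ^ 2 + φ (φ u)) * φ (φ β) = 0 := by
      have h1 := congrArg φ hE1
      simp only [map_add, map_mul, map_one, map_pow, map_zero] at h1
      rw [hq3 β] at h1
      exact h1
    set v : K := φ u with hv
    set w : K := φ v with hw
    set b1 : K := φ β with hb1
    set b2 : K := φ b1 with hb2
    have hwu : φ w = u := hq3 u
    -- the norm of u^{q+1} + u + 1 is nonzero
    have ht : u * v + u + 1 ≠ 0 := by
      have : u ^ (q + 1) + u + 1 = u * v + u + 1 := by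
        rw [hv, hφ, pow_succ, mul_comm]
      rwa [this] at h
    have ht1 : v * w + v + 1 ≠ 0 := by
      intro hc
      apply ht
      apply φ.injective
      rw [map_zero, map_add, map_add, map_mul, map_one, ← hv, ← hw]
      exact hc
    have ht2 : w * u + w + 1 ≠ 0 := by
      intro hc
      apply ht1
      apply φ.injective
      rw [map_zero, map_add, map_add, map_mul, map_one, ← hw, hwu]
      exact hc
    have hN : (u * v + u + 1) * (v * w + v + 1) * (w * u + w + 1) * β = 0 := by
      linear_combination
        (w + 2*v*w + v*w^2 + v^2*w + v^2*w^2) * hE0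
        + (w + w^2 + 2*u*w + u*w^2) * hE1
        + (1 + v + u + 2*u*v + u*v^2) * hE2
        - (w*b2 + w*b1 + w^2*b2 + v*w*b2 + 2*v*w*b1 + v*w^2*b2 + v*w^2*b1
          + v^2*w*b1 + v^2*w^2*b1 + 2*u*w*b2 + u*w*b1 + u*w^2*b2 + 3*u*v*w*b2
          + 3*u*v*w*b1 + u*v*w*β + 2*u*v*w^2*b2 + u*v*w^2*b1 + u*v^2*w*b2
          + 2*u*v^2*w*b1 + u*v^2*w^2*b2 + u*v^2*w^2*b1) * htwo
    rcases mul_eq_zero.mp hN with h0 | h0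
    · exact absurd h0 (by
        intro hc
        rcases mul_eq_zero.mp hc with h1 | h1
        · rcases mul_eq_zero.mp h1 with h2 | h2
          · exact ht h2
          · exact ht1 h2
        · exact ht2 h1)
    · exact h0
  -- bijective from injective
  rw [Finite.injective_iff_bijective.symm]
  intro β₁ β₂ hEq
  simp only at hEq
  have hδ : β₁ + β₂ = 0 := by
    apply key
    have e2 : (β₁ + β₂) ^ q ^ 2 = β₁ ^ q ^ 2 + β₂ ^ q ^ 2 := by
      rw [← hφ2, ← hφ2, ← hφ2]; simp only [map_add]
    have e1 : (β₁ + β₂) ^ q = β₁ ^ q + β₂ ^ q := by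
      rw [← hφ, ← hφ, ← hφ]; simp only [map_add]
    rw [e2, e1]
    linear_combination hEq + (u * β₂ ^ q ^ 2 + (u+1) * β₂ ^ q + (u^2+u) * β₂) * htwo
  linear_combination hδ - β₂ * htwo
end

section
/- Let q = 2^s and u ∈ F_{q^3} with u^{q+1} + u + 1 = 0. Then the kernel of the F_q-linear map L_u(β) = uβ^{q^2} + (u+1)β^q + (u^2+u)β on F_{q^3} has F_q-dimension 2. -/
open Polynomial

theorem stmt_12 (s : ℕ) (hs : 0 < s) (q : ℕ) (hq : q = 2 ^ s)
    (K : Type*) [Field K] [Fintype K] (hK : Fintype.card K = q ^ 3)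
    (u : K) (h : u ^ (q + 1) + u + 1 = 0) :
    Nat.card {β : K // u * β ^ q ^ 2 + (u + 1) * β ^ q + (u ^ 2 + u) * β = 0} = q ^ 2 := by
  classical
  have hq1 : 1 < q := by rw [hq]; exact Nat.one_lt_pow hs.ne' one_lt_two
  -- characteristic 2
  haveI : CharP K (ringChar K) := ringChar.charP K
  obtain ⟨n, hp, hcard⟩ := FiniteField.card K (ringChar K)
  have h2 : ringChar K = 2 := by
    have hdvd2 : ringChar K ∣ 2 := by
      refine hp.dvd_of_dvd_pow (n := s * 3) ?_
      have : ringChar K ∣ ringChar K ^ (n : ℕ) := dvd_pow_self _ n.pos.ne'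
      rw [← hcard, hK, hq, ← pow_mul] at this
      exact this
    exact (Nat.prime_dvd_prime_iff_eq hp Nat.prime_two).mp hdvd2
  haveI hchar : CharP K 2 := h2 ▸ ringChar.charP K
  haveI : Fact (Nat.Prime 2) := ⟨Nat.prime_two⟩
  have htwo : (2 : K) = 0 := by exact_mod_cast (CharP.cast_eq_zero K 2)
  have frob : ∀ a b : K, (a + b) ^ q = a ^ q + b ^ q := by
    intro a b; rw [hq]; exact add_pow_char_pow a b 2 s
  have frobP : ∀ a b : K[X], (a + b) ^ q = a ^ q + b ^ q := by
    intro a b; rw [hq]; exact add_pow_char_pow a b 2 s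
  -- basic facts about u
  have hu0 : u ≠ 0 := by
    intro h0
    rw [h0, zero_pow (by omega : q + 1 ≠ 0)] at h
    simp at h
  have hpow : u ^ (q + 1) = u + 1 := by linear_combination h - (u + 1) * htwo
  set v : K := u ^ q with hv
  have huv : u * v = u + 1 := by rw [hv, ← pow_succ']; exact hpow
  have hv0 : v ≠ 0 := pow_ne_zero _ hu0
  have hu1 : u + 1 ≠ 0 := by rw [← huv]; exact mul_ne_zero hu0 hv0
  have hfr1 : (u + 1) ^ q = v + 1 := by rw [frob u 1, one_pow]
  have hfr2 : (u ^ 2 + u) ^ q = v ^ 2 + v := by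
    rw [frob (u ^ 2) u, ← pow_mul, mul_comm 2 q, pow_mul]
  -- the linearized polynomial
  set P : K[X] := C u * X ^ q ^ 2 + C (u + 1) * X ^ q + C (u ^ 2 + u) * X with hPdef
  have hPq : P ^ q = C v * X ^ q ^ 3 + C (v + 1) * X ^ q ^ 2 + C (v ^ 2 + v) * X ^ q := by
    rw [hPdef, frobP, frobP, mul_pow, mul_pow, mul_pow, ← C_pow, ← C_pow, ← C_pow,
      ← pow_mul, ← pow_mul, hfr1, hfr2, show q ^ 2 * q = q ^ 3 from by ring,
      show q * q = q ^ 2 from by ring, ← hv]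
  have hCuv : C u * C v = C u + 1 := by rw [← C_mul, huv, C_add, C_1]
  have htwoP : (2 : K[X]) = 0 := by
    rw [(map_ofNat C 2).symm, htwo, C_0]
  have keyP : C (u ^ 2) * P ^ q + P = C (u ^ 2 + u) * (X ^ q ^ 3 - X) := by
    rw [hPq, hPdef]
    simp only [C_add, C_pow, C_1]
    linear_combination
      (C u * X ^ q ^ 3 + C u * X ^ q ^ 2 + (C u * C v + 2 * C u + 1) * X ^ q) * hCuv +
        ((C u ^ 2 + C u) * X ^ q ^ 2 + (C u ^ 2 + 2 * C u + 1) * X ^ q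
          + (C u ^ 2 + C u) * X) * htwoP
  -- P divides X^(q^3) - X
  have hq0 : 0 < q := by omega
  have hdvd : P ∣ (X ^ q ^ 3 - X : K[X]) := by
    have h1 : P ∣ C (u ^ 2) * P ^ q + P :=
      dvd_add (Dvd.dvd.mul_left (dvd_pow_self P hq0.ne') _) dvd_rfl
    rw [keyP] at h1
    have hne : u ^ 2 + u ≠ 0 := by
      have : u ^ 2 + u = u * (u + 1) := by ring
      rw [this]; exact mul_ne_zero hu0 hu1
    have h2' : P ∣ C ((u ^ 2 + u)⁻¹) * (C (u ^ 2 + u) * (X ^ q ^ 3 - X)) :=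
      Dvd.dvd.mul_left h1 _
    rwa [← mul_assoc, ← C_mul, inv_mul_cancel₀ hne, C_1, one_mul] at h2'
  -- facts about X^(q^3) - X
  have hq3 : 1 < q ^ 3 := Nat.one_lt_pow (by norm_num) hq1
  have hfdeg : ((X : K[X]) ^ q ^ 3 - X).natDegree = q ^ 3 :=
    FiniteField.X_pow_card_sub_X_natDegree_eq K hq3
  have hfne : ((X : K[X]) ^ q ^ 3 - X) ≠ 0 := FiniteField.X_pow_card_sub_X_ne_zero K hq3
  have hfroots : ((X : K[X]) ^ q ^ 3 - X).roots = Finset.univ.val := by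
    have := FiniteField.roots_X_pow_card_sub_X K
    rwa [hK] at this
  have hfsplits : ((X : K[X]) ^ q ^ 3 - X).Splits := by
    rw [splits_iff_card_roots, hfroots, hfdeg]
    simpa using hK
  have hfsep : ((X : K[X]) ^ q ^ 3 - X).Separable := by
    have hd : derivative ((X : K[X]) ^ q ^ 3 - X) = -1 := by
      rw [derivative_sub, derivative_X_pow, derivative_X]
      have hc : ((q ^ 3 : ℕ) : K) = 0 := by rw [← hK]; exact Nat.cast_card_eq_zero K
      simp [hc]
    rw [separable_def, hd]
    exact IsCoprime.neg_right isCoprime_one_right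
  -- facts about P
  have hPdeg : P.natDegree = q ^ 2 := by
    have h1 : q ≤ q ^ 2 := Nat.le_self_pow two_ne_zero q
    have h2 : ¬ q ^ 2 = q := by nlinarith
    have h3 : ¬ q ^ 2 = 1 := by nlinarith
    have h4 : 1 ≤ q ^ 2 := by nlinarith
    rw [hPdef]
    compute_degree!
    · rw [if_neg (show ¬ q = 1 by omega)]; simpa [h2] using hu0
  have hPne : P ≠ 0 := by
    intro h0
    rw [h0, natDegree_zero] at hPdeg
    nlinarith
  have hPsep : P.Separable := hfsep.of_dvd hdvd
  have hPsplits : P.Splits := hfsplits.of_dvd hfne hdvd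
  have hProots : P.roots.card = q ^ 2 := by
    rw [splits_iff_card_roots.mp hPsplits, hPdeg]
  have hnodup : P.roots.Nodup := Polynomial.nodup_roots hPsep
  -- conclude
  have heval : ∀ β : K, P.eval β = u * β ^ q ^ 2 + (u + 1) * β ^ q + (u ^ 2 + u) * β := by
    intro β; rw [hPdef]; simp
  have hmem : ∀ β : K,
      (u * β ^ q ^ 2 + (u + 1) * β ^ q + (u ^ 2 + u) * β = 0) ↔ β ∈ P.roots.toFinset := by
    intro β
    rw [Multiset.mem_toFinset, mem_roots hPne, IsRoot.def, heval β]
  rw [Nat.card_congr (Equiv.subtypeEquivRight hmem), Nat.card_eq_fintype_card,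
    Fintype.card_coe, Multiset.toFinset_card_of_nodup hnodup, hProots]
end

section
/- Let q = 2^s with s ≡ 1 (mod 3) and u ∈ F_{q^3} with u^3 + u + 1 = 0. Then the kernel of L_u(β) = uβ^{q^2} + (u+1)β^q + (u^2+u)β equals {x u^2 + y(u+1) : x, y ∈ F_q}. -/
theorem stmt_13 (s : ℕ) (hs : 0 < s) (hmod : s % 3 = 1)
    (q : ℕ) (hq : q = 2 ^ s)
    (K : Type*) [Field K] [Fintype K] (hK : Fintype.card K = q ^ 3)
    (u : K) (h : u ^ 3 + u + 1 = 0) :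
    {β : K | u * β ^ q ^ 2 + (u + 1) * β ^ q + (u ^ 2 + u) * β = 0} =
      {β : K | ∃ x y : K, x ^ q = x ∧ y ^ q = y ∧ β = x * u ^ 2 + y * (u + 1)} := by
  have hcard : Fintype.card K = 2 ^ (s * 3) := by rw [hK, hq, ← pow_mul]
  have h2 : (2 : K) = 0 := by
    have hc := FiniteField.cast_card_eq_zero K
    rw [hcard] at hc
    push_cast at hc
    exact pow_eq_zero_iff (by positivity : 0 < s * 3).ne' |>.mp hc
  haveI : CharP K 2 := by
    have hdvd := ringChar.dvd (by exact_mod_cast h2 : ((2:ℕ):K) = 0)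
    have hp : (ringChar K).Prime := CharP.char_is_prime K (ringChar K)
    have : ringChar K = 2 := (Nat.prime_dvd_prime_iff_eq hp Nat.prime_two).mp hdvd
    exact this ▸ ringChar.charP K
  have hu3 : u ^ 3 = u + 1 := by linear_combination h - (u + 1) * h2
  have hu8 : u ^ 8 = u := by
    linear_combination (u^5 - u^3 - u^2 + u + 2) * h + (-2*u - 1) * h2
  have h8m : ∀ m : ℕ, u ^ (8:ℕ) ^ m = u := by
    intro m
    induction m with
    | zero => simp
    | succ n ih => rw [pow_succ, pow_mul, ih, hu8]
  have huq : u ^ q = u ^ 2 := by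
    have hs3 : s = 3 * (s / 3) + 1 := by omega
    rw [hq, hs3, pow_succ, pow_mul, pow_mul]
    norm_num
    rw [h8m]
  have hadd : ∀ a b : K, (a + b) ^ q = a ^ q + b ^ q := by
    intro a b; rw [hq]; exact add_pow_expChar_pow a b 2 s
  have hpc : ∀ β : K, β ^ q ^ 3 = β := by
    intro β; rw [← hK]; exact FiniteField.pow_card β
  have hu0 : u ≠ 0 := fun hu => by rw [hu] at h; norm_num at h
  have e2q : (u ^ 2) ^ q = u ^ 4 := by
    rw [← pow_mul, mul_comm, pow_mul, huq, ← pow_mul]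
  have e4q : (u ^ 4) ^ q = u ^ 8 := by
    rw [← pow_mul, mul_comm, pow_mul, huq, ← pow_mul]
  ext β
  simp only [Set.mem_setOf_eq]
  constructor
  · intro hker
    have eq1 : (β ^ q) ^ q = β ^ q ^ 2 := by rw [← pow_mul, ← pow_two]
    have eq2 : (β ^ q ^ 2) ^ q = β := by rw [← pow_mul, ← pow_succ, hpc]
    have hT : (β + β ^ q + β ^ q ^ 2) ^ q = β + β ^ q + β ^ q ^ 2 := by
      rw [hadd, hadd, eq1, eq2]; ring
    refine ⟨(β + (β + β ^ q + β ^ q ^ 2) * (u + 1)) * (u ^ 2)⁻¹,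
      β + β ^ q + β ^ q ^ 2, ?_, hT, ?_⟩
    · have key : (β ^ q + (β + β ^ q + β ^ q ^ 2) * (u ^ 2 + 1)) * u ^ 2
          = (β + (β + β ^ q + β ^ q ^ 2) * (u + 1)) * u ^ 4 := by
        linear_combination (u ^ 2) * hker
          + (-(u ^ 2) * (β + β ^ q + β ^ q ^ 2) - 2 * u * β) * h
          + (2 * u ^ 2 * β + u ^ 2 * β ^ q + u ^ 2 * β ^ q ^ 2 + u * β) * h2
      rw [mul_pow, hadd, mul_pow, hT, hadd u 1, one_pow, huq, inv_pow, e2q, ← inv_pow]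
      field_simp
      apply mul_right_cancel₀ (pow_ne_zero 2 hu0)
      linear_combination key
    · field_simp
      linear_combination (-((β + β ^ q + β ^ q ^ 2) * (u + 1))) * h2
  · rintro ⟨x, y, hx, hy, rfl⟩
    have hb1 : (x * u ^ 2 + y * (u + 1)) ^ q = x * u ^ 4 + y * (u ^ 2 + 1) := by
      rw [hadd, mul_pow, mul_pow, hx, hy, e2q, hadd u 1, one_pow, huq]
    have hb2 : (x * u ^ 2 + y * (u + 1)) ^ q ^ 2 = x * u ^ 8 + y * (u ^ 4 + 1) := by
      rw [pow_two q, pow_mul, hb1, hadd, mul_pow, mul_pow, hx, hy, e4q, hadd _ 1,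
        one_pow, e2q]
    rw [hb1, hb2]
    linear_combination (x * (u ^ 6 - u ^ 4 - u ^ 3 + 2 * u ^ 2 + 4 * u) + y * (u ^ 2 + 1)) * h
      + (x * (-3 * u ^ 2 - 2 * u) + y * (u ^ 2 + u)) * h2
end

section
/- Let q = 2^s, u ∈ F_{q^3} with u^{q+1} + u + 1 = 0 and u^3 + u + 1 ≠ 0 (or s ≢ 1 mod 3). Let β_1 = u^q and β_2 ∈ F_{q^3} with β_2^{q-1} = u^2. Then the kernel of L_u(β) = uβ^{q^2} + (u+1)β^q + (u^2+u)β equals {xβ_1 + yβ_2 : x, y ∈ F_q}. -/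
open Polynomial in
lemma aux_roots_card {K : Type*} [Field K] (a b c : K) (ha : a ≠ 0)
    (n m : ℕ) (h1 : 1 < m) (hmn : m < n) :
    {x : K | a * x ^ n + b * x ^ m + c * x = 0}.ncard ≤ n := by
  classical
  set p : K[X] := C a * X ^ n + C b * X ^ m + C c * X with hp
  have hcoeff : p.coeff n = a := by
    simp only [hp, coeff_add, coeff_C_mul, coeff_X_pow, coeff_X, if_pos rfl, mul_one,
      if_neg (by omega : ¬ n = m), if_neg (by omega : ¬ 1 = n), mul_zero, add_zero]
    simp
  have hpne : p ≠ 0 := fun h0 => ha (by simp [h0] at hcoeff; exact hcoeff.symm)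
  have hdeg : p.natDegree ≤ n := by
    refine le_trans (natDegree_add_le _ _) ?_
    simp only [max_le_iff]
    refine ⟨le_trans (natDegree_add_le _ _) ?_, ?_⟩
    · simp only [max_le_iff]
      exact ⟨natDegree_C_mul_X_pow_le a n, le_trans (natDegree_C_mul_X_pow_le b m) hmn.le⟩
    · calc (C c * X).natDegree = (C c * X ^ 1).natDegree := by rw [pow_one]
        _ ≤ 1 := natDegree_C_mul_X_pow_le c 1
        _ ≤ n := by omega
  have hsub : {x : K | a * x ^ n + b * x ^ m + c * x = 0} ⊆ ↑p.roots.toFinset := by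
    intro x hx
    simp only [Set.mem_setOf_eq] at hx
    simp only [Finset.coe_sort_coe, Multiset.mem_toFinset, Finset.mem_coe, mem_roots, hpne,
      ne_eq, not_false_eq_true, true_and, IsRoot.def]
    simp [hp, hx]
  calc {x : K | a * x ^ n + b * x ^ m + c * x = 0}.ncard
      ≤ (↑p.roots.toFinset : Set K).ncard := Set.ncard_le_ncard hsub (Finset.finite_toSet _)
    _ = p.roots.toFinset.card := Set.ncard_coe_finset _
    _ ≤ Multiset.card p.roots := Multiset.toFinset_card_le _
    _ ≤ p.natDegree := p.card_roots'
    _ ≤ n := hdeg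

lemma aux_mod (s : ℕ) (hs : 1 ≤ s) (hdvd : 7 ∣ 2 ^ s - 2) : s % 3 = 1 := by
  have h2s : 2 ≤ 2 ^ s := by calc 2 = 2 ^ 1 := rfl
                                  _ ≤ 2 ^ s := Nat.pow_le_pow_right (by norm_num) hs
  have hz : ((2 : ZMod 7)) ^ s = 2 := by
    have : ((2 ^ s - 2 : ℕ) : ZMod 7) = 0 := (ZMod.natCast_eq_zero_iff _ _).mpr hdvd
    rw [Nat.cast_sub h2s] at this
    push_cast at this
    linear_combination this
  have hzz : ((2 : ZMod 7)) ^ s = 2 ^ (s % 3) := by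
    conv_lhs => rw [← Nat.div_add_mod s 3]
    rw [pow_add, pow_mul, show ((2:ZMod 7)) ^ 3 = 1 from by decide, one_pow, one_mul]
  rw [hzz] at hz
  have h3 : s % 3 < 3 := Nat.mod_lt _ (by norm_num)
  interval_cases h : s % 3 <;> revert hz <;> decide



theorem stmt_14 (s : ℕ) (hs : 0 < s) (q : ℕ) (hq : q = 2 ^ s)
    (K : Type*) [Field K] [Fintype K] (hK : Fintype.card K = q ^ 3)
    (u : K) (h : u ^ (q + 1) + u + 1 = 0)
    (h' : u ^ 3 + u + 1 ≠ 0 ∨ s % 3 ≠ 1)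
    (β₁ β₂ : K) (hβ₁ : β₁ = u ^ q) (hβ₂ : β₂ ^ (q - 1) = u ^ 2) :
    {β : K | u * β ^ q ^ 2 + (u + 1) * β ^ q + (u ^ 2 + u) * β = 0} =
      {β : K | ∃ x y : K, x ^ q = x ∧ y ^ q = y ∧ β = x * β₁ + y * β₂} := by
  classical
  subst hβ₁
  haveI : Fact (Nat.Prime 2) := ⟨Nat.prime_two⟩
  -- characteristic 2
  have hcard2 : Fintype.card K = 2 ^ (3 * s) := by rw [hK, hq, ← pow_mul, mul_comm]
  haveI hchar : CharP K 2 := by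
    have h0 : ((2 ^ (3 * s) : ℕ) : K) = 0 := by
      rw [← hcard2]; exact FiniteField.cast_card_eq_zero K
    have hdvd : ringChar K ∣ 2 ^ (3 * s) := ringChar.dvd (by exact_mod_cast h0)
    have hprime : (ringChar K).Prime := CharP.char_is_prime K (ringChar K)
    have h2' : ringChar K = 2 :=
      (Nat.prime_dvd_prime_iff_eq hprime Nat.prime_two).mp (hprime.dvd_of_dvd_pow hdvd)
    exact ringChar.of_eq h2'
  have h2 : (2 : K) = 0 := by
    have := CharTwo.add_self_eq_zero (R := K) 1
    linear_combination this
  have hq1 : 1 < q := by rw [hq]; exact Nat.one_lt_two_pow hs.ne'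
  have hqq : q < q ^ 2 := by nlinarith
  -- Frobenius facts
  have fq : ∀ x y : K, (x + y) ^ q = x ^ q + y ^ q := by
    intro x y; rw [hq]; exact add_pow_char_pow x y 2 s
  have hpq2 : ∀ x : K, x ^ q ^ 2 = (x ^ q) ^ q := by
    intro x; rw [pow_two, pow_mul]
  have hcube : ∀ x : K, x ^ q ^ 3 = x := by intro x; rw [← hK]; exact FiniteField.pow_card x
  have hA3 : ((u ^ q) ^ q) ^ q = u := by
    rw [← pow_mul, ← pow_mul, show q * (q * q) = q ^ 3 by ring, hcube]
  -- basic nonvanishing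
  have hu0 : u ≠ 0 := by
    rintro rfl
    rw [zero_pow (by omega), zero_add, zero_add] at h
    exact one_ne_zero h
  have e1 : u ^ q * u = u + 1 := by
    rw [pow_succ] at h
    linear_combination h - (u + 1) * h2
  have e2 : (u ^ q) ^ q * (u + 1) = 1 := by
    have hE : ((u ^ q) ^ q) * u ^ q = u ^ q + 1 := by
      have := congrArg (· ^ q) e1
      simp only [mul_pow] at this
      rw [fq u 1, one_pow] at this
      exact this
    calc (u ^ q) ^ q * (u + 1) = (u ^ q) ^ q * (u ^ q * u) := by rw [e1]
      _ = ((u ^ q) ^ q * u ^ q) * u := by ring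
      _ = (u ^ q + 1) * u := by rw [hE]
      _ = u ^ q * u + u := by ring
      _ = (u + 1) + u := by rw [e1]
      _ = 1 := by linear_combination u * h2
  have hu1 : u + 1 ≠ 0 := by
    intro h1; rw [h1, mul_zero] at e2; exact one_ne_zero e2.symm
  -- β₂ facts
  have hb0 : β₂ ≠ 0 := by
    intro h0
    rw [h0, zero_pow (by omega)] at hβ₂
    exact hu0 (pow_eq_zero_iff (by norm_num)|>.mp hβ₂.symm)
  have hb2q : β₂ ^ q = u ^ 2 * β₂ := by
    conv_lhs => rw [show q = (q - 1) + 1 by omega]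
    rw [pow_succ, hβ₂]
  -- membership of linear combinations in the kernel
  have hmemb : ∀ x y : K, x ^ q = x → y ^ q = y →
      u * (x * u ^ q + y * β₂) ^ q ^ 2 + (u + 1) * (x * u ^ q + y * β₂) ^ q
        + (u ^ 2 + u) * (x * u ^ q + y * β₂) = 0 := by
    intro x y hx hy
    have E1 : (x * u ^ q + y * β₂) ^ q = x * (u ^ q) ^ q + y * u ^ 2 * β₂ := by
      rw [fq, mul_pow, mul_pow, hx, hy, hb2q]; ring
    have E2 : (x * u ^ q + y * β₂) ^ q ^ 2 = x * u + y * (u ^ q) ^ 2 * u ^ 2 * β₂ := by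
      have hu2q : (u ^ 2) ^ q = (u ^ q) ^ 2 := by rw [← pow_mul, mul_comm, pow_mul]
      rw [hpq2, E1, fq, mul_pow, mul_pow, mul_pow, hx, hy, hA3, hb2q, hu2q]
      ring
    rw [E1, E2]
    linear_combination x * e2 + ((u + 1) * x + u * (u ^ q * u + u + 1) * y * β₂) * e1
      + ((u ^ 2 + u + 1) * x + (u ^ 3 + 2 * u ^ 2 + u) * y * β₂) * h2
  -- u^3 + u + 1 ≠ 0
  have hu3 : u ^ 3 + u + 1 ≠ 0 := by
    rcases h' with h' | h'
    · exact h'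
    intro h3
    have hu3' : u ^ 3 = u + 1 := by linear_combination h3 - (u + 1) * h2
    have h7 : u ^ 7 = 1 := by
      linear_combination (u ^ 4 + u ^ 2 + u + 1) * h3
        - (u ^ 5 + u ^ 4 + u ^ 3 + u ^ 2 + u + 1) * h2
    have hs2 : 2 ≤ s := by omega
    have hq4 : 4 ≤ q := by
      rw [hq]; calc 4 = 2 ^ 2 := rfl
        _ ≤ 2 ^ s := Nat.pow_le_pow_right (by norm_num) hs2
    have hord : u ^ (q - 2) = 1 := by
      have hstep : u ^ (q - 2) * u ^ 3 = u ^ 3 := by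
        rw [← pow_add, show q - 2 + 3 = q + 1 by omega, pow_succ, e1, ← hu3']
      exact mul_right_cancel₀ (pow_ne_zero _ hu0) (by rw [hstep, one_mul])
    have hune : u ≠ 1 := by
      intro h1
      rw [h1] at h3
      exact one_ne_zero (α := K) (by linear_combination h3 - h2)
    have hord7 : orderOf u = 7 := by
      rcases (Nat.Prime.eq_one_or_self_of_dvd (by norm_num : Nat.Prime 7) _
        (orderOf_dvd_of_pow_eq_one h7)) with hh | hh
      · exact absurd (orderOf_eq_one_iff.mp hh) hune
      · exact hh
    have h7d : (7 : ℕ) ∣ q - 2 := hord7 ▸ orderOf_dvd_of_pow_eq_one hord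
    exact h' (aux_mod s hs (by rw [← hq]; exact h7d))
  -- the fixed-field set
  set F : Set K := {x : K | x ^ q = x} with hF
  -- trace map
  let tr : K →+ K := AddMonoidHom.mk' (fun x => x + x ^ q + x ^ q ^ 2) (by
    intro a b
    rw [hpq2 (a + b), fq a b, fq (a ^ q) (b ^ q), ← hpq2 a, ← hpq2 b]
    ring)
  have htr : ∀ x : K, tr x = x + x ^ q + x ^ q ^ 2 := fun _ => rfl
  have hker_card : Nat.card tr.ker ≤ q ^ 2 := by
    have hsub : (tr.ker : Set K) ⊆ {x : K | (1:K) * x ^ q ^ 2 + 1 * x ^ q + 1 * x = 0} := by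
      intro x hx
      have hx' : tr x = 0 := hx
      rw [htr] at hx'
      simp only [Set.mem_setOf_eq]
      linear_combination hx'
    calc Nat.card tr.ker = (tr.ker : Set K).ncard := Nat.card_coe_set_eq _
      _ ≤ _ := Set.ncard_le_ncard hsub (Set.toFinite _)
      _ ≤ q ^ 2 := aux_roots_card 1 1 1 one_ne_zero _ _ hq1 hqq
  have hrange_sub : Set.range tr ⊆ F := by
    rintro _ ⟨x, rfl⟩
    show (tr x) ^ q = tr x
    rw [htr, fq, fq, ← hpq2, ← pow_mul, show q ^ 2 * q = q ^ 3 by ring, hcube]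
    ring
  have hFq : q ≤ F.ncard := by
    have hcardK : Nat.card K = q ^ 3 := by rw [Nat.card_eq_fintype_card, hK]
    have hsplit : Nat.card K = Nat.card (K ⧸ tr.ker) * Nat.card tr.ker :=
      AddSubgroup.card_eq_card_quotient_mul_card_addSubgroup tr.ker
    have hrange : Nat.card (K ⧸ tr.ker) = Nat.card tr.range :=
      Nat.card_congr (QuotientAddGroup.quotientKerEquivRange tr).toEquiv
    have hqr : q ≤ Nat.card tr.range := by
      by_contra hlt
      push_neg at hlt
      have h1 : q ^ 3 ≤ Nat.card tr.range * Nat.card tr.ker := by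
        rw [← hrange, ← hsplit, hcardK]
      have h2' : Nat.card tr.range * Nat.card tr.ker ≤ (q - 1) * q ^ 2 :=
        Nat.mul_le_mul (by omega) hker_card
      have : q ^ 3 ≤ (q - 1) * q ^ 2 := le_trans h1 h2'
      have hq0 : 0 < q := by omega
      nlinarith [Nat.sub_add_cancel hq0.le]
    calc q ≤ Nat.card tr.range := hqr
      _ = (tr.range : Set K).ncard := Nat.card_coe_set_eq _
      _ = (Set.range tr).ncard := by rw [AddMonoidHom.coe_range]
      _ ≤ F.ncard := Set.ncard_le_ncard hrange_sub (Set.toFinite _)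
  -- injectivity
  have hinj : Set.InjOn (fun p : K × K => p.1 * u ^ q + p.2 * β₂) (F ×ˢ F) := by
    rintro ⟨x1, y1⟩ ⟨hx1, hy1⟩ ⟨x2, y2⟩ ⟨hx2, hy2⟩ heq
    simp only [hF, Set.mem_setOf_eq] at hx1 hy1 hx2 hy2
    simp only at heq
    have hy : y1 = y2 := by
      by_contra hne
      have hyne : y1 + y2 ≠ 0 := by
        intro h0
        exact hne (by linear_combination h0 - y2 * h2)
      set c : K := (x1 + x2) * (y1 + y2)⁻¹ with hc
      have hstep : (x1 + x2) * u ^ q = (y1 + y2) * β₂ := by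
        linear_combination heq + (x2 * u ^ q - y1 * β₂) * h2
      have hb : β₂ = c * u ^ q := by
        rw [hc]
        field_simp
        linear_combination -hstep
      have hcq : c ^ q = c := by
        rw [hc, mul_pow, fq, hx1, hx2, inv_pow, fq, hy1, hy2]
      have hc0 : c ≠ 0 := by
        intro h0
        rw [h0, zero_mul] at hb
        exact hb0 hb
      have hkey : (u ^ q) ^ q = u ^ 2 * u ^ q := by
        have hA : β₂ ^ q = c * (u ^ q) ^ q := by rw [hb, mul_pow, hcq]
        have hB : β₂ ^ q = u ^ 2 * (c * u ^ q) := by rw [hb2q, hb]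
        have hAB : c * (u ^ q) ^ q = c * (u ^ 2 * u ^ q) := by
          rw [← hA, hB]; ring
        exact mul_left_cancel₀ hc0 hAB
      exact hu3 (by linear_combination e2 - (u + 1) * hkey - (u * (u + 1)) * e1
        + (1 - u ^ 2) * h2)
    have hx : x1 = x2 := by
      subst hy
      have : (x1 - x2) * u ^ q = 0 := by linear_combination heq
      rcases mul_eq_zero.mp this with hh | hh
      · exact sub_eq_zero.mp hh
      · exact absurd hh (pow_ne_zero _ hu0)
    exact Prod.ext hx hy
  -- image description
  have himg : {β : K | ∃ x y : K, x ^ q = x ∧ y ^ q = y ∧ β = x * u ^ q + y * β₂}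
      = (fun p : K × K => p.1 * u ^ q + p.2 * β₂) '' (F ×ˢ F) := by
    ext β
    constructor
    · rintro ⟨x, y, hx, hy, rfl⟩
      exact ⟨(x, y), ⟨hx, hy⟩, rfl⟩
    · rintro ⟨⟨x, y⟩, ⟨hx, hy⟩, rfl⟩
      exact ⟨x, y, hx, hy, rfl⟩
  -- cardinalities
  have hScard : q ^ 2 ≤ {β : K | ∃ x y : K, x ^ q = x ∧ y ^ q = y ∧ β = x * u ^ q + y * β₂}.ncard := by
    rw [himg, Set.ncard_image_of_injOn hinj]
    have hprod : (F ×ˢ F).ncard = F.ncard * F.ncard := by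
      have hpe := Nat.card_congr (Equiv.Set.prod F F)
      rw [Nat.card_prod] at hpe
      simp only [Nat.card_coe_set_eq] at hpe
      exact hpe
    rw [hprod, pow_two]
    exact Nat.mul_le_mul hFq hFq
  have hKcard : {β : K | u * β ^ q ^ 2 + (u + 1) * β ^ q + (u ^ 2 + u) * β = 0}.ncard ≤ q ^ 2 :=
    aux_roots_card u (u + 1) (u ^ 2 + u) hu0 (q ^ 2) q hq1 hqq
  -- conclusion
  have hsub : {β : K | ∃ x y : K, x ^ q = x ∧ y ^ q = y ∧ β = x * u ^ q + y * β₂}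
      ⊆ {β : K | u * β ^ q ^ 2 + (u + 1) * β ^ q + (u ^ 2 + u) * β = 0} := by
    rintro β ⟨x, y, hx, hy, rfl⟩
    exact hmemb x y hx hy
  exact (Set.eq_of_subset_of_ncard_le hsub (le_trans hKcard hScard) (Set.toFinite _)).symm
end

section
/- Let q = 2^s and u ∈ F_{q^3}. The map L_u(β) = uβ^{q^2} + (u+1)β^q + (u^2+u)β is a permutation of F_{q^3} if and only if u^{q+1} + u + 1 ≠ 0. -/
theorem stmt_15 (s : ℕ) (hs : 0 < s) (q : ℕ) (hq : q = 2 ^ s)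
    (K : Type*) [Field K] [Fintype K] (hK : Fintype.card K = q ^ 3)
    (u : K) :
    Function.Bijective
        (fun β : K => u * β ^ q ^ 2 + (u + 1) * β ^ q + (u ^ 2 + u) * β) ↔
      u ^ (q + 1) + u + 1 ≠ 0 := by
  have hq1 : 1 < q := by
    rw [hq]; exact Nat.one_lt_two_pow_iff.mpr (by omega)
  have hq0 : q ≠ 0 := by omega
  -- characteristic 2
  obtain ⟨p, hp⟩ := CharP.exists K
  haveI := hp
  obtain ⟨n, hpp, hcard⟩ := FiniteField.card K p
  have hp2 : p = 2 := by
    have h1 : p ^ (n : ℕ) = 2 ^ (s * 3) := by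
      rw [← hcard, hK, hq, ← pow_mul]
    have hd : p ∣ 2 ^ (s * 3) := h1 ▸ dvd_pow_self p n.pos.ne'
    exact (Nat.prime_dvd_prime_iff_eq hpp Nat.prime_two).mp (hpp.dvd_of_dvd_pow hd)
  haveI hC2 : CharP K 2 := hp2 ▸ hp
  haveI : Fact (Nat.Prime 2) := ⟨Nat.prime_two⟩
  have htwo : (2 : K) = 0 := by
    have h := CharP.cast_eq_zero K 2
    exact_mod_cast h
  have frob_add : ∀ x y : K, (x + y) ^ q = x ^ q + y ^ q := by
    intro x y; rw [hq]; exact add_pow_char_pow x y 2 s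
  have frob_sub : ∀ x y : K, (x - y) ^ q = x ^ q - y ^ q := by
    intro x y; rw [hq]; exact sub_pow_char_pow (p := 2) x y s
  have pow_q3 : ∀ x : K, ((x ^ q) ^ q) ^ q = x := by
    intro x
    rw [← pow_mul, ← pow_mul, show q * (q * q) = q ^ 3 by ring, ← hK]
    exact FiniteField.pow_card x
  have frobE : ∀ a x y z : K, (a * x + (a + 1) * y + (a ^ 2 + a) * z) ^ q
      = a ^ q * x ^ q + (a ^ q + 1) * y ^ q + ((a ^ q) ^ 2 + a ^ q) * z ^ q := by
    intro a x y z
    simp only [frob_add, mul_pow, one_pow, pow_right_comm a 2 q]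
  constructor
  · -- if bijective then u^(q+1)+u+1 ≠ 0
    intro hbij hx0
    have hu : u ≠ 0 := by
      intro h
      rw [h, zero_pow (show q + 1 ≠ 0 by omega)] at hx0
      simp at hx0
    have hux : u ^ q * u = u + 1 := by
      rw [pow_succ] at hx0
      linear_combination hx0 - (u + 1) * htwo
    have ha12 : (u ^ q) ^ q * u ^ q = u ^ q + 1 := by
      have h := congrArg (· ^ q) hux
      rw [mul_pow, frob_add, one_pow] at h
      linear_combination h
    have hNu : (u ^ q) ^ q * u ^ q * u = 1 := by
      linear_combination u * ha12 + hux + u * htwo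
    have hu3 : u ^ (q ^ 2 + q + 1) = 1 := by
      rw [pow_add, pow_add, pow_one, show q ^ 2 = q * q from sq q, pow_mul]
      linear_combination hNu
    have hv1 : (u ^ 2) ^ (q ^ 2 + q + 1) = 1 := by
      rw [← pow_mul, mul_comm, pow_mul, hu3, one_pow]
    -- cyclic group argument
    set v : Kˣ := (Units.mk0 u hu) ^ 2 with hv
    have hvc : (v : K) = u ^ 2 := by rw [hv]; simp
    have hv1' : v ^ (q ^ 2 + q + 1) = 1 := by
      apply Units.ext
      rw [Units.val_pow_eq_pow_val, hvc, Units.val_one]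
      exact hv1
    obtain ⟨g, hg⟩ := IsCyclic.exists_generator (α := Kˣ)
    have hor : orderOf g = q ^ 3 - 1 := by
      rw [orderOf_eq_card_of_forall_mem_zpowers hg,
        Nat.card_units, Nat.card_eq_fintype_card, hK]
    obtain ⟨k, hk⟩ := (Submonoid.mem_powers_iff _ _).mp
      (mem_powers_iff_mem_zpowers.mpr (hg v))
    have hdvd : q ^ 3 - 1 ∣ k * (q ^ 2 + q + 1) := by
      rw [← hor]
      apply orderOf_dvd_of_pow_eq_one
      rw [pow_mul, hk, hv1']
    have hfact : q ^ 3 - 1 = (q - 1) * (q ^ 2 + q + 1) := by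
      have h1q3 : 1 ≤ q ^ 3 := Nat.one_le_pow _ _ (by omega)
      have h1q : 1 ≤ q := by omega
      zify [h1q3, h1q]
      ring
    have hdvd2 : q - 1 ∣ k := by
      rw [hfact] at hdvd
      exact (Nat.mul_dvd_mul_iff_right (show 0 < q ^ 2 + q + 1 by positivity)).mp hdvd
    obtain ⟨m, hm⟩ := hdvd2
    have hw : (g ^ m) ^ (q - 1) = v := by
      rw [← pow_mul, show m * (q - 1) = k by rw [mul_comm]; exact hm.symm, hk]
    set β : K := ((g ^ m : Kˣ) : K) with hβ
    have hβ0 : β ≠ 0 := Units.ne_zero _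
    have hβq : β ^ q = u ^ 2 * β := by
      have hq' : q - 1 + 1 = q := by omega
      have h1 : β ^ (q - 1) = u ^ 2 := by
        rw [hβ, ← Units.val_pow_eq_pow_val, hw, hvc]
      calc β ^ q = β ^ (q - 1) * β := by rw [← pow_succ, hq']
        _ = u ^ 2 * β := by rw [h1]
    have hβqq : (β ^ q) ^ q = (u ^ q) ^ 2 * (u ^ 2 * β) := by
      calc (β ^ q) ^ q = (u ^ 2 * β) ^ q := by rw [hβq]
        _ = (u ^ 2) ^ q * β ^ q := mul_pow _ _ _
        _ = (u ^ q) ^ 2 * (u ^ 2 * β) := by rw [hβq, pow_right_comm]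
    have h00 : (fun β : K => u * β ^ q ^ 2 + (u + 1) * β ^ q + (u ^ 2 + u) * β) β
        = (fun β : K => u * β ^ q ^ 2 + (u + 1) * β ^ q + (u ^ 2 + u) * β) 0 := by
      dsimp only
      rw [zero_pow (show q ^ 2 ≠ 0 by positivity), zero_pow hq0,
        show q ^ 2 = q * q from sq q, pow_mul, hβqq, hβq]
      linear_combination ((u ^ 2 * u ^ q - u ^ 2 - u) * β) * hux
        + ((u ^ 3 * u ^ q + u ^ 2 * u ^ q) * β) * htwo
    exact hβ0 (hbij.injective h00)
  · intro hxne
    have hx : u ^ q * u + u + 1 ≠ 0 := by rwa [pow_succ] at hxne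
    apply Finite.injective_iff_bijective.mp
    intro β β' hfeq
    dsimp only at hfeq
    rw [show q ^ 2 = q * q from sq q, pow_mul, pow_mul] at hfeq
    have h0 : u * (((β - β') ^ q) ^ q) + (u + 1) * (β - β') ^ q
        + (u ^ 2 + u) * (β - β') = 0 := by
      simp only [frob_sub]
      linear_combination hfeq
    have h1 : u ^ q * (β - β') + (u ^ q + 1) * (((β - β') ^ q) ^ q)
        + ((u ^ q) ^ 2 + u ^ q) * ((β - β') ^ q) = 0 := by
      have h := congrArg (· ^ q) h0
      rw [frobE, zero_pow hq0, pow_q3 (β - β')] at h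
      linear_combination h
    have h2 : (u ^ q) ^ q * ((β - β') ^ q) + ((u ^ q) ^ q + 1) * (β - β')
        + (((u ^ q) ^ q) ^ 2 + (u ^ q) ^ q) * (((β - β') ^ q) ^ q) = 0 := by
      have h := congrArg (· ^ q) h1
      rw [frobE, zero_pow hq0, pow_q3 (β - β')] at h
      linear_combination h
    have hx1 : (u ^ q) ^ q * u ^ q + u ^ q + 1 ≠ 0 := by
      have e : (u ^ q * u + u + 1) ^ q = (u ^ q) ^ q * u ^ q + u ^ q + 1 := by
        simp only [frob_add, mul_pow, one_pow]
      intro h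
      exact hx ((pow_eq_zero_iff hq0).mp (e.trans h))
    have hx2 : u * (u ^ q) ^ q + (u ^ q) ^ q + 1 ≠ 0 := by
      have e : ((u ^ q) ^ q * u ^ q + u ^ q + 1) ^ q
          = u * (u ^ q) ^ q + (u ^ q) ^ q + 1 := by
        simp only [frob_add, mul_pow, one_pow, pow_q3]
      intro h
      exact hx1 ((pow_eq_zero_iff hq0).mp (e.trans h))
    rw [← sub_eq_zero]
    generalize hG2 : ((β - β') ^ q) ^ q = G2 at h0 h1 h2
    generalize hG1 : (β - β') ^ q = G1 at h0 h1 h2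
    generalize hd : β - β' = d at h0 h1 h2 ⊢
    generalize hA2 : (u ^ q) ^ q = a2 at h1 h2 hx1 hx2
    generalize hA1 : u ^ q = a1 at h1 h2 hx hx1 hx2
    have key : (a1 * u + u + 1) * ((a2 * a1 + a1 + 1) * (u * a2 + a2 + 1)) * d = 0 := by
      linear_combination (-a2 + a1*a2^2 + a1^2*a2 + a1^2*a2^2) * h0
        + (-a2 - a2^2 - u*a2^2) * h1 + (1 + a1 + u - u*a1^2) * h2
        + ((a1*a2 + a1*a2^2 + u*a2 + u*a1 + 2*u*a1*a2 + u*a1*a2^2 + u*a1^2*a2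
            + u^2*a2 + u^2*a1*a2) * d) * htwo + (a1^2 * u * d) * htwo
    have hN : (a1 * u + u + 1) * ((a2 * a1 + a1 + 1) * (u * a2 + a2 + 1)) ≠ 0 :=
      mul_ne_zero hx (mul_ne_zero hx1 hx2)
    exact (mul_eq_zero.mp key).resolve_left hN
end

section
/- Let q = 2^s and u ∈ F_{q^3} with u^{q+1} + u + 1 = 0. Then there exist exactly q^2 - 1 nonzero β ∈ F_{q^3} such that u^2 + (β^{q^2-1} + β^{q-1} + 1)u + β^{q-1} = 0. -/
open Polynomial


private lemma char2_norm_one {A : Type*} [CommRing A] (q : ℕ)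
    (hfrob : ∀ a b : A, (a + b) ^ q = a ^ q + b ^ q) (h2 : (2 : A) = 0)
    (w y : A) (hw : w ^ (q + 1) = w + 1)
    (hy : y ^ (q + 1) = w ^ q * y + w ^ (q + 1)) :
    y ^ (q ^ 2 + q + 1) = 1 := by
  have epow : ∀ z : A, z ^ (q ^ 2 + q + 1) = (z ^ (q + 1)) ^ q * z := by
    intro z
    rw [← pow_mul, ← pow_succ]
    congr 1
    ring
  have hNw : w ^ (q ^ 2 + q + 1) = 1 := by
    rw [epow, hw, hfrob w 1, one_pow]
    calc (w ^ q + 1) * w = w ^ (q + 1) + w := by rw [add_mul, one_mul, pow_succ]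
      _ = (w + 1) + w := by rw [hw]
      _ = 1 := by linear_combination w * h2
  have k1 : (w ^ q) ^ q * w ^ q = (w ^ (q + 1)) ^ q := by
    rw [← mul_pow, ← pow_succ]
  have k2 : (w ^ q) ^ q * w ^ (q + 1) = w ^ (q ^ 2 + q + 1) := by
    rw [← pow_mul, ← pow_add]
    congr 1
    ring
  calc y ^ (q ^ 2 + q + 1) = (y ^ (q + 1)) ^ q * y := epow y
    _ = ((w ^ q * y) ^ q + (w ^ (q + 1)) ^ q) * y := by rw [hy, hfrob]
    _ = (w ^ q) ^ q * (y ^ q * y) + (w ^ (q + 1)) ^ q * y := by rw [mul_pow]; ring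
    _ = (w ^ q) ^ q * (w ^ q * y + w ^ (q + 1)) + (w ^ (q + 1)) ^ q * y := by
        rw [← pow_succ, hy]
    _ = w ^ (q ^ 2 + q + 1) + ((w ^ (q + 1)) ^ q * y + (w ^ (q + 1)) ^ q * y) := by
        rw [mul_add, k2, ← k1]; ring
    _ = 1 := by rw [hNw]; linear_combination ((w ^ (q + 1)) ^ q * y) * h2


theorem stmt_16 (s : ℕ) (hs : 0 < s) (q : ℕ) (hq : q = 2 ^ s)
    (K : Type*) [Field K] [Fintype K] (hK : Fintype.card K = q ^ 3)
    (u : K) (h : u ^ (q + 1) + u + 1 = 0) :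
    Nat.card {β : K // β ≠ 0 ∧
        u ^ 2 + (β ^ (q ^ 2 - 1) + β ^ (q - 1) + 1) * u + β ^ (q - 1) = 0} =
      q ^ 2 - 1 := by
  classical
  have hq2 : 2 ≤ q := by
    rw [hq]
    calc 2 = 2 ^ 1 := by norm_num
      _ ≤ 2 ^ s := Nat.pow_le_pow_right (by norm_num) hs
  -- characteristic 2
  haveI : CharP K (ringChar K) := ringChar.charP K
  have hp : (ringChar K).Prime := CharP.char_is_prime K _
  obtain ⟨n, -, hcard⟩ := FiniteField.card K (ringChar K)
  have hchar2 : ringChar K = 2 := by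
    have hdvd : ringChar K ∣ 2 ^ (s * 3) := by
      have h1 : ringChar K ∣ (ringChar K) ^ (n : ℕ) := dvd_pow_self _ (by positivity)
      rw [← hcard, hK, hq, ← pow_mul] at h1
      exact h1
    have := hp.dvd_of_dvd_pow hdvd
    exact (Nat.prime_dvd_prime_iff_eq hp Nat.prime_two).mp this
  haveI : CharP K 2 := hchar2 ▸ ‹CharP K (ringChar K)›
  have htwo : (2 : K) = 0 := by exact_mod_cast CharP.cast_eq_zero K 2
  -- basic facts about u
  have hu0 : u ≠ 0 := by
    intro h0
    rw [h0, zero_pow (by omega : q + 1 ≠ 0)] at h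
    simp at h
  have hu1 : u ^ (q + 1) = u + 1 := by linear_combination h - (u + 1) * htwo
  have hune1 : u + 1 ≠ 0 := by
    intro h1
    have hu' : u = 1 := by linear_combination h1 - htwo
    rw [hu'] at h
    have : (1 : K) = 0 := by linear_combination h - htwo
    exact one_ne_zero this
  -- exponent arithmetic
  obtain ⟨r, hr⟩ : ∃ r, q = r + 2 := ⟨q - 2, by omega⟩
  have e1 : q ^ 2 - 1 = (q - 1) * (q + 1) := by
    have h1 : q - 1 = r + 1 := by omega
    rw [h1]
    apply Nat.sub_eq_of_eq_add
    rw [hr]; ring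
  have e2 : q ^ 3 - 1 = (q - 1) * (q ^ 2 + q + 1) := by
    have h1 : q - 1 = r + 1 := by omega
    rw [h1]
    apply Nat.sub_eq_of_eq_add
    rw [hr]; ring
  have hq2m1 : q ^ 2 - 1 ≠ 0 := by
    rw [e1]; exact Nat.mul_ne_zero (by omega) (by omega)
  have hq1m1 : q - 1 ≠ 0 := by omega
  set P : K[X] := X ^ (q ^ 2 - 1) + (C (u ^ q) * X ^ (q - 1) + C (u ^ (q + 1))) with hPdef
  have heval : ∀ β : K, P.eval β = β ^ (q ^ 2 - 1) + u ^ q * β ^ (q - 1) + u ^ (q + 1) := by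
    intro β
    simp [hPdef]
    ring
  have hP0 : P ≠ 0 := by
    intro hP
    apply hune1
    have h0 : P.eval 0 = u + 1 := by
      rw [heval 0, zero_pow hq2m1, zero_pow hq1m1, mul_zero, add_zero, zero_add, hu1]
    rw [hP, eval_zero] at h0
    exact h0.symm
  have hPdeg : P.natDegree = q ^ 2 - 1 := by
    have hlt : (C (u ^ q) * X ^ (q - 1) + C (u ^ (q + 1))).natDegree
        < (X ^ (q ^ 2 - 1) : K[X]).natDegree := by
      rw [natDegree_X_pow]
      have h1 : (C (u ^ q) * X ^ (q - 1) : K[X]).natDegree ≤ q - 1 :=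
        natDegree_C_mul_X_pow_le _ _
      have h2 : (C (u ^ (q + 1)) : K[X]).natDegree = 0 := natDegree_C _
      have h3 := natDegree_add_le (C (u ^ q) * X ^ (q - 1)) (C (u ^ (q + 1)) : K[X])
      have h4 : q - 1 < q ^ 2 - 1 := by
        have : q < q ^ 2 := by nlinarith
        omega
      omega
    rw [hPdef, natDegree_add_eq_left_of_natDegree_lt hlt, natDegree_X_pow]
  -- AdjoinRoot computation
  have hdegne : P.degree ≠ 0 := by
    rw [degree_eq_natDegree hP0, hPdeg]
    exact_mod_cast hq2m1
  haveI : CharP (AdjoinRoot P) 2 :=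
    charP_of_injective_ringHom (AdjoinRoot.of.injective_of_degree_ne_zero hdegne) 2
  haveI : ExpChar (AdjoinRoot P) 2 := ExpChar.prime Nat.prime_two
  have htwoA : (2 : AdjoinRoot P) = 0 := by exact_mod_cast CharP.cast_eq_zero (AdjoinRoot P) 2
  have hfrobA : ∀ a b : AdjoinRoot P, (a + b) ^ q = a ^ q + b ^ q := by
    intro a b
    rw [hq]
    exact add_pow_char_pow ..
  set x := AdjoinRoot.root P with hx
  set w := AdjoinRoot.of P u with hw
  have hrel0 : x ^ (q ^ 2 - 1) + (w ^ q * x ^ (q - 1) + w ^ (q + 1)) = 0 := by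
    have hr := AdjoinRoot.eval₂_root P
    rw [hPdef] at hr
    simpa only [eval₂_add, eval₂_mul, eval₂_pow, eval₂_X, eval₂_C, map_pow] using hr
  have hwrel : w ^ (q + 1) = w + 1 := by
    have h' : w ^ (q + 1) + w + 1 = 0 := by
      have := congrArg (AdjoinRoot.of P) h
      simpa only [map_add, map_pow, map_one, map_zero] using this
    linear_combination h' - (w + 1) * htwoA
  have hyrel : (x ^ (q - 1)) ^ (q + 1) = w ^ q * x ^ (q - 1) + w ^ (q + 1) := by
    have hxx : (x ^ (q - 1)) ^ (q + 1) = x ^ (q ^ 2 - 1) := by rw [← pow_mul, ← e1]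
    rw [hxx]
    linear_combination hrel0 - (w ^ q * x ^ (q - 1) + w ^ (q + 1)) * htwoA
  have hNy := char2_norm_one q hfrobA htwoA w (x ^ (q - 1)) hwrel hyrel
  have hx1 : x ^ (q ^ 3 - 1) = 1 := by rw [e2, pow_mul]; exact hNy
  have hdvd : P ∣ (X ^ (q ^ 3) - X : K[X]) := by
    rw [← AdjoinRoot.mk_eq_zero, map_sub, map_pow, AdjoinRoot.mk_X]
    have hq3 : q ^ 3 = (q ^ 3 - 1) + 1 := by
      have : 1 ≤ q ^ 3 := Nat.one_le_pow _ _ (by omega)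
      omega
    rw [hq3, pow_succ, hx1, one_mul, sub_self]
  -- the polynomial X^(q^3) - X over K
  have h1q3 : 1 < q ^ 3 := by
    have : 2 ^ 3 ≤ q ^ 3 := Nat.pow_le_pow_left hq2 3
    omega
  have hQne : (X ^ (q ^ 3) - X : K[X]) ≠ 0 := FiniteField.X_pow_card_sub_X_ne_zero K h1q3
  have hQdeg : (X ^ (q ^ 3) - X : K[X]).natDegree = q ^ 3 :=
    FiniteField.X_pow_card_sub_X_natDegree_eq K h1q3
  have hQroots : (X ^ (q ^ 3) - X : K[X]).roots = Finset.univ.val := by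
    have := FiniteField.roots_X_pow_card_sub_X K
    rwa [hK] at this
  have hQsplits : (X ^ (q ^ 3) - X : K[X]).Splits := by
    rw [splits_iff_card_roots, hQroots, hQdeg]
    simpa using hK
  have hQsep : (X ^ (q ^ 3) - X : K[X]).Separable := by
    have hder : derivative (X ^ (q ^ 3) - X : K[X]) = -1 := by
      rw [derivative_sub, derivative_X_pow, derivative_X]
      have hc : ((q ^ 3 : ℕ) : K) = 0 := by rw [← hK]; exact Nat.cast_card_eq_zero K
      rw [hc, C_0, zero_mul, zero_sub]
    rw [Polynomial.separable_def, hder]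
    exact isCoprime_one_right.neg_right
  have hsep : P.Separable := hQsep.of_dvd hdvd
  have hsplits : P.Splits := hQsplits.of_dvd hQne hdvd
  have hroots_card : P.roots.card = q ^ 2 - 1 := by
    rw [splits_iff_card_roots.mp hsplits, hPdeg]
  have hnodup : P.roots.Nodup := nodup_roots hsep
  have hiff : ∀ β : K,
      (β ≠ 0 ∧ u ^ 2 + (β ^ (q ^ 2 - 1) + β ^ (q - 1) + 1) * u + β ^ (q - 1) = 0)
        ↔ β ∈ P.roots.toFinset := by
    intro β
    rw [Multiset.mem_toFinset, mem_roots hP0, IsRoot.def, heval β]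
    constructor
    · rintro ⟨-, hE⟩
      have key : u * (β ^ (q ^ 2 - 1) + u ^ q * β ^ (q - 1) + u ^ (q + 1)) = 0 := by
        calc u * (β ^ (q ^ 2 - 1) + u ^ q * β ^ (q - 1) + u ^ (q + 1))
            = u ^ 2 + (β ^ (q ^ 2 - 1) + β ^ (q - 1) + 1) * u + β ^ (q - 1) := by
              linear_combination (β ^ (q - 1) + u) * hu1
          _ = 0 := hE
      rcases mul_eq_zero.mp key with h' | h'
      · exact absurd h' hu0
      · exact h'
    · intro hroot
      refine ⟨?_, ?_⟩
      · intro hb0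
        rw [hb0, zero_pow hq2m1, zero_pow hq1m1] at hroot
        apply hune1
        rw [← hu1]
        linear_combination hroot
      · calc u ^ 2 + (β ^ (q ^ 2 - 1) + β ^ (q - 1) + 1) * u + β ^ (q - 1)
            = u * (β ^ (q ^ 2 - 1) + u ^ q * β ^ (q - 1) + u ^ (q + 1)) := by
              linear_combination (-(β ^ (q - 1)) - u) * hu1
          _ = 0 := by rw [hroot, mul_zero]
  calc Nat.card {β : K // β ≠ 0 ∧
          u ^ 2 + (β ^ (q ^ 2 - 1) + β ^ (q - 1) + 1) * u + β ^ (q - 1) = 0}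
      = Nat.card {β : K // β ∈ P.roots.toFinset} :=
        Nat.card_congr (Equiv.subtypeEquivRight hiff)
    _ = P.roots.toFinset.card := by rw [Nat.card_eq_fintype_card, Fintype.card_coe]
    _ = P.roots.card := Multiset.toFinset_card_of_nodup hnodup
    _ = q ^ 2 - 1 := hroots_card
end

section
/- Let q = 2^s, β ∈ F_{q^3} with Tr_{q^3/q}(β) ≠ 0, and suppose u ∈ F_{q^3} satisfies u^{q+1} + u + 1 = 0 and βu + β^q + β ∈ F_q. Then Tr_{q^3/2}(β^{q+1} / Tr_{q^3/q}(β)^2) = 0. -/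
theorem stmt_17 (s : ℕ) (hs : 0 < s) (q : ℕ) (hq : q = 2 ^ s)
    (K : Type*) [Field K] [Fintype K] (hK : Fintype.card K = q ^ 3)
    (β : K) (htr : β + β ^ q + β ^ q ^ 2 ≠ 0) (u : K)
    (h1 : u ^ (q + 1) + u + 1 = 0)
    (h2 : (β * u + β ^ q + β) ^ q = β * u + β ^ q + β) :
    ∑ i ∈ Finset.range (3 * s), (β ^ (q + 1) / (β + β ^ q + β ^ q ^ 2) ^ 2) ^ 2 ^ i = 0 := by
  have hcard : Fintype.card K = 2 ^ (3 * s) := by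
    rw [hK, hq, ← pow_mul, mul_comm]
  have h2z : (2 : K) = 0 := by
    have hc := FiniteField.cast_card_eq_zero K
    rw [hcard] at hc
    push_cast at hc
    exact pow_eq_zero_iff (by positivity) |>.mp hc
  haveI : CharP K 2 := (CharP.charP_iff_prime_eq_zero Nat.prime_two).mpr h2z
  haveI : Fact (Nat.Prime 2) := Fact.mk Nat.prime_two
  have hfrob : ∀ x y : K, (x + y) ^ q = x ^ q + y ^ q := by
    intro x y
    rw [hq]
    exact add_pow_char_pow x y 2 s
  have hkey : β ^ q * u ^ q + β ^ q ^ 2 + β ^ q = β * u + β ^ q + β := by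
    rw [hfrob, hfrob, mul_pow, ← pow_mul, ← sq] at h2
    exact h2
  obtain ⟨T, hT⟩ : ∃ t : K, t = β + β ^ q + β ^ q ^ 2 := ⟨_, rfl⟩
  rw [← hT] at htr ⊢
  have hβq : β * u ^ 2 + T * u = β ^ q := by
    linear_combination (β ^ q) * h1 - u * hkey + (β ^ q ^ 2 * u - β ^ q) * h2z + u * hT
  obtain ⟨w, hw⟩ : ∃ x : K, x = β * u / T := ⟨_, rfl⟩
  have hu : w * T = β * u := by rw [hw]; field_simp
  have hzw : β ^ (q + 1) / T ^ 2 = w ^ 2 + w := by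
    rw [div_eq_iff (pow_ne_zero 2 htr)]
    linear_combination (-β) * hβq - (β * u + w * T + T) * hu
  rw [hzw]
  have hterm : ∀ i : ℕ, (w ^ 2 + w) ^ 2 ^ i = w ^ 2 ^ (i + 1) - w ^ 2 ^ i := by
    intro i
    have h3 : (w ^ 2 + w) ^ 2 ^ i = (w ^ 2) ^ 2 ^ i + w ^ 2 ^ i := add_pow_char_pow _ _ 2 i
    rw [h3, ← pow_mul, sub_eq_add_neg, CharTwo.neg_eq]
    ring_nf
  calc ∑ i ∈ Finset.range (3 * s), (w ^ 2 + w) ^ 2 ^ i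
      = ∑ i ∈ Finset.range (3 * s), (w ^ 2 ^ (i + 1) - w ^ 2 ^ i) :=
        Finset.sum_congr rfl fun i _ => hterm i
    _ = w ^ 2 ^ (3 * s) - w ^ 2 ^ 0 := Finset.sum_range_sub (fun i => w ^ 2 ^ i) (3 * s)
    _ = 0 := by rw [← hcard, FiniteField.pow_card, pow_zero, pow_one, sub_self]
end

section
/- Let q = 2^s and β ∈ F_{q^3} with Tr_{q^3/q}(β) ≠ 0. If Tr_{q^3/2}(β^{q+1} / Tr_{q^3/q}(β)^2) = 0, then there exists u ∈ F_{q^3} with u^2 + (β^{q^2-1} + β^{q-1} + 1)u + β^{q-1} = 0; moreover any such u satisfies u^{q+1} + u + 1 = 0 and βu + β^q + β ∈ F_q. -/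
open Finset Polynomial in
lemma my_artin_schreier {K : Type*} [Field K] [Fintype K] (n : ℕ) (hn : 0 < n)
    (hcard : Fintype.card K = 2 ^ n) (a : K)
    (ha : ∑ i ∈ Finset.range n, a ^ 2 ^ i = 0) : ∃ v : K, v ^ 2 + v = a := by
  classical
  -- characteristic 2
  haveI : CharP K (ringChar K) := ringChar.charP K
  have hprime : (ringChar K).Prime := CharP.char_is_prime K (ringChar K)
  obtain ⟨m, hmp, hm⟩ := FiniteField.card K (ringChar K)
  have hp2 : ringChar K = 2 := by
    have hdvd : ringChar K ∣ 2 ^ n := by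
      rw [← hcard, hm]
      exact dvd_pow_self _ (by positivity)
    have := hprime.dvd_of_dvd_pow hdvd
    exact (Nat.prime_dvd_prime_iff_eq hprime Nat.prime_two).mp this
  haveI : CharP K 2 := by rw [← hp2]; infer_instance
  haveI : Fact (Nat.Prime 2) := ⟨Nat.prime_two⟩
  have htwo : (2 : K) = 0 := by exact_mod_cast CharP.cast_eq_zero K 2
  have hpowcard : ∀ x : K, x ^ 2 ^ n = x := by
    intro x; rw [← hcard]; exact FiniteField.pow_card x
  -- the trace of x^2 + x is zero
  set Tr : K → K := fun x => ∑ i ∈ Finset.range n, x ^ 2 ^ i with hTr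
  have hTrAS : ∀ x : K, Tr (x ^ 2 + x) = 0 := by
    intro x
    have e1 : ∀ i : ℕ, (x ^ 2 + x) ^ 2 ^ i = x ^ 2 ^ (i + 1) + x ^ 2 ^ i := by
      intro i
      rw [add_pow_char_pow, ← pow_mul, pow_succ, mul_comm (2 ^ i) 2, mul_comm 2 (2^i)]
    simp only [hTr, e1, Finset.sum_add_distrib]
    have e2 : ∑ i ∈ Finset.range n, x ^ 2 ^ (i + 1)
        = (∑ i ∈ Finset.range n, x ^ 2 ^ i) + x ^ 2 ^ n - x ^ 2 ^ 0 := by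
      rw [← Finset.sum_range_succ]
      rw [Finset.sum_range_succ']
      ring
    rw [e2, hpowcard, pow_zero, pow_one]
    ring_nf
    linear_combination (∑ i ∈ Finset.range n, x ^ 2 ^ i) * htwo
  -- root set of the trace polynomial has ≤ 2^(n-1) elements
  set P : K[X] := ∑ i ∈ Finset.range n, X ^ 2 ^ i with hP
  have hPne : P ≠ 0 := by
    intro h0
    have : P.coeff (2 ^ (n - 1)) = 1 := by
      rw [hP, Polynomial.finset_sum_coeff]
      simp only [Polynomial.coeff_X_pow]
      rw [Finset.sum_eq_single (n - 1)]
      · simp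
      · intro b hb hbne
        have : ¬ (2 ^ b = 2 ^ (n - 1)) := by
          intro hh
          exact hbne (Nat.pow_right_injective (le_refl 2) hh)
        simp [if_neg] at *
        omega
      · intro hh; exact absurd (Finset.mem_range.mpr (by omega)) hh
    rw [h0] at this
    simp at this
  have hPdeg : P.natDegree ≤ 2 ^ (n - 1) := by
    apply Polynomial.natDegree_sum_le_of_forall_le
    intro i hi
    rw [Polynomial.natDegree_X_pow]
    exact Nat.pow_le_pow_right (by norm_num) (by simp at hi; omega)
  have hevalP : ∀ x : K, P.eval x = Tr x := by
    intro x; rw [hP, hTr]; simp [Polynomial.eval_finset_sum]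
  set R : Finset K := Finset.univ.filter (fun x => Tr x = 0) with hR
  have hRcard : R.card ≤ 2 ^ (n - 1) := by
    have hsub : R ⊆ P.roots.toFinset := by
      intro x hx
      rw [Multiset.mem_toFinset, Polynomial.mem_roots hPne]
      rw [hR, Finset.mem_filter] at hx
      exact by rw [Polynomial.IsRoot, hevalP]; exact hx.2
    calc R.card ≤ P.roots.toFinset.card := Finset.card_le_card hsub
      _ ≤ Multiset.card P.roots := Multiset.toFinset_card_le _
      _ ≤ P.natDegree := P.card_roots'
      _ ≤ 2 ^ (n - 1) := hPdeg
  -- image of x ↦ x^2 + x has ≥ 2^(n-1) elements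
  set S : Finset K := Finset.univ.image (fun x : K => x ^ 2 + x) with hS
  have hScard : 2 ^ (n - 1) ≤ S.card := by
    have hfib : ∀ b ∈ S, ({x ∈ Finset.univ | x ^ 2 + x = b} : Finset K).card ≤ 2 := by
      intro b _
      rcases Finset.eq_empty_or_nonempty ({x ∈ Finset.univ | x ^ 2 + x = b} : Finset K) with he | ⟨x, hx⟩
      · simp [he]
      · have hsub2 : ({y ∈ Finset.univ | y ^ 2 + y = b} : Finset K) ⊆ {x, x + 1} := by
          intro y hy
          simp only [Finset.mem_filter, Finset.mem_univ, true_and] at hy hx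
          have hxy : (x + y) ^ 2 = x + y := by
            have : (x + y) ^ 2 + (x + y) = 0 := by
              linear_combination hx - hy + (x*y + y + y^2) * htwo
            linear_combination this - (x + y) * htwo
          have : (x + y) * (x + y + 1) = 0 := by linear_combination hxy + (x+y)*htwo
          rcases mul_eq_zero.mp this with h1 | h1
          · have : y = x := by linear_combination -h1 + y * htwo
            simp [this]
          · have : y = x + 1 := by linear_combination -h1 + y * htwo
            simp [this]
        calc _ ≤ ({x, x+1} : Finset K).card := Finset.card_le_card hsub2
          _ ≤ 2 := Finset.card_insert_le .. |>.trans (by simp)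
    have := Finset.card_le_mul_card_image (Finset.univ : Finset K) 2 hfib
    rw [Finset.card_univ, hcard, ← hS] at this
    have h2n : 2 ^ n = 2 * 2 ^ (n - 1) := by
      rw [← pow_succ']
      congr 1; omega
    omega
  -- conclude
  have hSR : S ⊆ R := by
    intro y hy
    rw [hS] at hy
    obtain ⟨x, _, rfl⟩ := Finset.mem_image.mp hy
    rw [hR, Finset.mem_filter]
    exact ⟨Finset.mem_univ _, hTrAS x⟩
  have : S = R := Finset.eq_of_subset_of_card_le hSR (hRcard.trans hScard)
  have haR : a ∈ R := by rw [hR, Finset.mem_filter]; exact ⟨Finset.mem_univ _, ha⟩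
  rw [← this, hS] at haR
  obtain ⟨v, _, hv⟩ := Finset.mem_image.mp haR
  exact ⟨v, hv⟩

theorem stmt_18 (s : ℕ) (hs : 0 < s) (q : ℕ) (hq : q = 2 ^ s)
    (K : Type*) [Field K] [Fintype K] (hK : Fintype.card K = q ^ 3)
    (β : K) (htr : β + β ^ q + β ^ q ^ 2 ≠ 0)
    (h : ∑ i ∈ Finset.range (3 * s),
        (β ^ (q + 1) / (β + β ^ q + β ^ q ^ 2) ^ 2) ^ 2 ^ i = 0) :
    (∃ u : K, u ^ 2 + (β ^ (q ^ 2 - 1) + β ^ (q - 1) + 1) * u + β ^ (q - 1) = 0) ∧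
      ∀ u : K, u ^ 2 + (β ^ (q ^ 2 - 1) + β ^ (q - 1) + 1) * u + β ^ (q - 1) = 0 →
        u ^ (q + 1) + u + 1 = 0 ∧ (β * u + β ^ q + β) ^ q = β * u + β ^ q + β := by
  have hq2 : 2 ≤ q := by rw [hq]; calc 2 = 2^1 := (pow_one 2).symm
                                       _ ≤ 2^s := Nat.pow_le_pow_right (by norm_num) hs
  have hcard : Fintype.card K = 2 ^ (3 * s) := by
    rw [hK, hq, ← pow_mul, mul_comm]
  -- characteristic 2
  haveI : CharP K (ringChar K) := ringChar.charP K
  have hprime : (ringChar K).Prime := CharP.char_is_prime K (ringChar K)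
  have hp2 : ringChar K = 2 := by
    rw [FiniteField.even_card_iff_char_two, hcard]
    have h3s : 3 * s ≠ 0 := by omega
    rw [Nat.pow_mod]
    simp [h3s]
  haveI hchar : CharP K 2 := by rw [← hp2]; infer_instance
  haveI : Fact (Nat.Prime 2) := ⟨Nat.prime_two⟩
  have htwo : (2 : K) = 0 := by exact_mod_cast CharP.cast_eq_zero K 2
  have hadd : ∀ x y : K, (x + y) ^ q = x ^ q + y ^ q := by
    intro x y; rw [hq]; exact add_pow_char_pow x y 2 s
  have hβ0 : β ≠ 0 := by
    rintro rfl; exact htr (by simp [zero_pow (by omega : q ≠ 0), zero_pow (by positivity : q^2 ≠ 0)])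
  have hpow3 : ∀ x : K, (x ^ q ^ 2) ^ q = x := by
    intro x
    rw [← pow_mul, ← pow_succ, ← hK, FiniteField.pow_card]
  have hb1q : (β ^ q) ^ q = β ^ q ^ 2 := by rw [← pow_mul, ← pow_two]
  set b1 := β ^ q with hb1
  set b2 := β ^ q ^ 2 with hb2
  have hb2q : b2 ^ q = β := hpow3 β
  set T := β + b1 + b2 with hT
  set N := β * b1 + b1 * b2 + b2 * β with hN
  have hTq : T ^ q = T := by rw [hT, hadd, hadd, hb1q, hb2q]; ring
  have hNq : N ^ q = N := by
    rw [hN, hadd, hadd, mul_pow, mul_pow, mul_pow, hb1q, hb2q]; ring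
  have hTne : T ≠ 0 := htr
  -- convert the quadratic coefficients
  have hcoef2 : β ^ (q ^ 2 - 1) = b2 / β := by
    rw [hb2, pow_sub₀ β hβ0 (by nlinarith : 1 ≤ q ^ 2), pow_one, div_eq_mul_inv]
  have hcoef1 : β ^ (q - 1) = b1 / β := by
    rw [hb1, pow_sub₀ β hβ0 (by omega : 1 ≤ q), pow_one, div_eq_mul_inv]
  have hqp1 : β ^ (q + 1) = b1 * β := by rw [pow_succ, hb1]
  constructor
  · -- existence
    obtain ⟨v, hv⟩ := my_artin_schreier (3 * s) (by omega) hcard _ h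
    rw [hqp1] at hv
    refine ⟨T / β * v, ?_⟩
    rw [hcoef2, hcoef1]
    have hv' : T ^ 2 * (v ^ 2 + v) = b1 * β := by
      rw [hv]; field_simp
    have hβ2 : (β:K)^2 ≠ 0 := pow_ne_zero _ hβ0
    apply mul_left_cancel₀ hβ2
    rw [mul_zero]
    have expand : β ^ 2 * ((T / β * v) ^ 2 + (b2 / β + b1 / β + 1) * (T / β * v) + b1 / β)
        = T ^ 2 * v ^ 2 + (b2 + b1 + β) * T * v + b1 * β := by
      field_simp
    rw [expand]
    linear_combination hv' + b1 * β * htwo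
  · -- properties of any root
    intro u hu
    rw [hcoef2, hcoef1] at hu
    have hw : (β * u) ^ 2 + T * (β * u) + β * b1 = 0 := by
      have := congrArg (fun x => x * β) hu
      simp only [add_mul, zero_mul] at this
      field_simp at this
      linear_combination β * this
    set z := β * u + β ^ q + β with hz0
    have hzw : β * u = z - b1 - β := by rw [hz0]; ring
    have hz : z ^ 2 + T * z + N = 0 := by
      linear_combination hw + (z*b1 + z*β + b1*β) * hzw + (2*β*b1 + β*b1*u + β*b2 + β^2 + β^2*u + b1*b2 + b1^2) * htwo
    -- z^q is also a root of X^2 + T X + N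
    have hzq : (z ^ q) ^ 2 + T * z ^ q + N = 0 := by
      have := congrArg (fun x : K => x ^ q) hz
      rw [hadd, hadd, mul_pow, hTq, hNq] at this
      rw [← pow_mul, mul_comm 2 q, pow_mul] at this
      rwa [zero_pow (by omega : q ≠ 0)] at this
    have hfactor : (z ^ q + z) * (z ^ q + z + T) = 0 := by
      linear_combination hzq + hz + (z^q * z + N + z^2 - 4*β*b1 - 2*β*b1*u - 2*β*b2 - β^2 - 2*β^2*u - β^2*u^2 - 2*b1*b2 - b1^2) * htwo
    have hzfix : z ^ q = z := by
      rcases mul_eq_zero.mp hfactor with h1 | h1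
      · linear_combination h1 - z * htwo
      · -- z^q = z + T leads to contradiction
        exfalso
        have hzq1 : z ^ q = z + T := by linear_combination h1 - (z + T) * htwo
        have hzq2 : (z ^ q) ^ q = z := by
          rw [hzq1, hadd, hzq1, hTq]
          linear_combination T * htwo
        have hzq3 : ((z ^ q) ^ q) ^ q = z ^ q := by rw [hzq2]
        have hzcard : ((z ^ q) ^ q) ^ q = z := by
          rw [← pow_mul, ← pow_mul]
          have hqq : q * (q * q) = q ^ 3 := by ring
          rw [hqq, ← hK]
          exact FiniteField.pow_card z
        rw [hzcard, hzq1] at hzq3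
        exact hTne (by linear_combination -hzq3)
    constructor
    · -- u^(q+1) + u + 1 = 0
      have hβb1 : β * b1 ≠ 0 := mul_ne_zero hβ0 (pow_ne_zero _ hβ0)
      have hβuq : b1 * u ^ q = z + b2 + b1 := by
        have e1 : (β * u) ^ q = b1 * u ^ q := by rw [mul_pow]
        have e2 : β * u = z + b1 + β := by rw [hzw]; linear_combination -(b1 + β) * htwo
        rw [← e1, e2, hadd, hadd, hzfix, hb1q]
      have hβu : β * u = z + b1 + β := by rw [hzw]; linear_combination -(b1 + β) * htwo
      have key : β * b1 * (u ^ (q + 1) + u + 1) = 0 := by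
        have expand2 : β * b1 * (u ^ (q + 1) + u + 1)
            = (b1 * u ^ q) * (β * u) + b1 * (β * u) + β * b1 := by ring
        rw [expand2, hβuq, hβu]
        linear_combination hz + (2*β*b1 + β*b1*u + 2*b1^2) * htwo
      rcases mul_eq_zero.mp key with h1 | h1
      · exact absurd h1 hβb1
      · exact h1
    · exact hzfix
end
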